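/- arXiv:math/9811094 — 4 statements merged into one kernel-verified Lean document; each statement's English description precedes it below -/
import Mathlib

section
/- Let X be a locally compact Hausdorff space and {E_i}_{i∈Λ} a family of idempotent elements of C₀(X, ℂ) such that the smallest closed subalgebra of C₀(X, ℂ) containing every E_i is all of C₀(X, ℂ), and suppose additionally that the family is closed under multiplication: for all i, j ∈ Λ, either E_i E_j = 0 or E_i E_j = E_k for some k ∈ Λ. Then a function f ∈ C₀(X, ℂ) takes all its values in ℤ if and only if f is a finite ℤ-linear combination of the functions E_i (i.e., f lies in the additive subgroup of C₀(X, ℂ) generated by {E_i : i ∈ Λ}). -/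
open scoped ZeroAtInfty

private noncomputable def mcoef {ι : Type*} [DecidableEq ι] (φ : Finset ι → ℤ) (S : Finset ι) :
    ℤ :=
  φ S - ∑ T ∈ (S.powerset.erase S).attach, mcoef φ T.1
  termination_by S.card
  decreasing_by
    have h := T.2
    rw [Finset.mem_erase, Finset.mem_powerset] at h
    exact Finset.card_lt_card (lt_of_le_of_ne h.2 h.1)

private lemma sum_mcoef {ι : Type*} [DecidableEq ι] (φ : Finset ι → ℤ) (S : Finset ι) :
    ∑ T ∈ S.powerset, mcoef φ T = φ S := by
  have h1 : ∑ T ∈ S.powerset.erase S, mcoef φ T + mcoef φ S = ∑ T ∈ S.powerset, mcoef φ T :=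
    Finset.sum_erase_add _ _ (Finset.mem_powerset_self S)
  rw [← h1, mcoef, Finset.sum_attach]
  ring

private lemma mcoef_empty {ι : Type*} [DecidableEq ι] (φ : Finset ι → ℤ) (h : φ ∅ = 0) :
    mcoef φ (∅ : Finset ι) = 0 := by
  rw [mcoef]
  rw [h, Finset.powerset_empty, Finset.erase_singleton]
  simp

private lemma round_eq_of_abs_lt {r : ℝ} {n : ℤ} (h : |r - n| < 1 / 2) : round r = n := by
  have : round (r - n + n) = round (r - n) + n := round_add_intCast _ _
  rw [sub_add_cancel] at this
  rw [this, round_eq_zero_iff.mpr ?_, zero_add]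
  rw [abs_lt] at h
  exact Set.mem_Ico.mpr ⟨le_of_lt h.1, h.2⟩

/-- If moreover the family of idempotents is closed under multiplication
(any product is `0` or again a member of the family), then the integer-valued functions in
`C₀(X, ℂ)` are exactly the finite `ℤ`-linear combinations of the `E_i`. -/
theorem stmt_9 {X : Type*} [TopologicalSpace X] [LocallyCompactSpace X] [T2Space X]
    {Λ : Type*} (E : Λ → C₀(X, ℂ))
    (hidem : ∀ i : Λ, E i * E i = E i)
    (hgen : closure ((NonUnitalAlgebra.adjoin ℂ (Set.range E) :
        NonUnitalSubalgebra ℂ C₀(X, ℂ)) : Set C₀(X, ℂ)) = Set.univ)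
    (hmul : ∀ i j : Λ, E i * E j = 0 ∨ ∃ k : Λ, E i * E j = E k) :
    ∀ f : C₀(X, ℂ), (∀ x : X, ∃ n : ℤ, f x = (n : ℂ)) ↔
      f ∈ AddSubgroup.closure (Set.range E) := by
  classical
  -- each E i takes values in {0, 1}
  have h01 : ∀ (i : Λ) (x : X), E i x = 0 ∨ E i x = 1 := by
    intro i x
    have h := congrArg (fun g : C₀(X, ℂ) => g x) (hidem i)
    simp only [ZeroAtInftyContinuousMap.coe_mul, Pi.mul_apply] at h
    have : E i x * (E i x - 1) = 0 := by linear_combination h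
    rcases mul_eq_zero.mp this with h' | h'
    · exact Or.inl h'
    · exact Or.inr (sub_eq_zero.mp h')
  -- evaluation commutes with finite sums
  have eval_sum : ∀ {ι : Type} (s : Finset ι) (F : ι → C₀(X, ℂ)) (x : X),
      (∑ i ∈ s, F i) x = ∑ i ∈ s, F i x := by
    intro ι s F x
    induction s using Finset.cons_induction with
    | empty => simp
    | cons a s ha ih => rw [Finset.sum_cons, Finset.sum_cons, ← ih]; simp
  intro f
  constructor
  · intro hf
    -- the span of the range of E is multiplicatively closed
    set V : Submodule ℂ C₀(X, ℂ) := Submodule.span ℂ (Set.range E) with hV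
    have hVmul : ∀ a ∈ V, ∀ b ∈ V, a * b ∈ V := by
      intro a ha b hb
      induction ha using Submodule.span_induction with
      | mem a hmem =>
        induction hb using Submodule.span_induction with
        | mem b hmemb =>
          obtain ⟨i, rfl⟩ := hmem
          obtain ⟨j, rfl⟩ := hmemb
          rcases hmul i j with h | ⟨k, h⟩
          · rw [h]; exact zero_mem V
          · rw [h]; exact Submodule.subset_span ⟨k, rfl⟩
        | zero => rw [mul_zero]; exact zero_mem V
        | add x y hx hy ihx ihy => rw [mul_add]; exact add_mem ihx ihy
        | smul c x hx ihx => rw [mul_smul_comm]; exact Submodule.smul_mem V c ihx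
      | zero => rw [zero_mul]; exact zero_mem V
      | add x y hx hy ihx ihy => rw [add_mul]; exact add_mem ihx ihy
      | smul c x hx ihx => rw [smul_mul_assoc]; exact Submodule.smul_mem V c ihx
    -- the adjoin is contained in the span
    have hadj : ((NonUnitalAlgebra.adjoin ℂ (Set.range E) :
        NonUnitalSubalgebra ℂ C₀(X, ℂ)) : Set C₀(X, ℂ)) ⊆ (V : Set C₀(X, ℂ)) := by
      intro a ha
      induction ha using NonUnitalAlgebra.adjoin_induction with
      | mem x hx => exact Submodule.subset_span hx
      | add x y hx hy ihx ihy => exact add_mem ihx ihy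
      | zero => exact zero_mem V
      | mul x y hx hy ihx ihy => exact hVmul x ihx y ihy
      | smul c x hx ihx => exact Submodule.smul_mem V c ihx
    -- approximate f by an element of the span within 1/2
    have hfc : f ∈ closure (V : Set C₀(X, ℂ)) := by
      apply closure_mono hadj
      rw [hgen]; trivial
    obtain ⟨g, hgV, hgdist⟩ : ∃ g ∈ (V : Set C₀(X, ℂ)), dist f g < 1 / 2 := by
      rw [Metric.mem_closure_iff] at hfc
      exact hfc (1 / 2) (by norm_num)
    rw [hV, SetLike.mem_coe, Submodule.mem_span_set'] at hgV
    obtain ⟨n, c, v, hg⟩ := hgV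
    -- indices
    have hk : ∀ i : Fin n, ∃ j : Λ, E j = (v i : C₀(X, ℂ)) := fun i => (v i).2
    choose k hkE using hk
    -- pointwise bound
    have hpt : ∀ x : X, ‖f x - g x‖ < 1 / 2 := by
      intro x
      calc ‖f x - g x‖ = ‖(f - g) x‖ := by
            simp [ZeroAtInftyContinuousMap.coe_sub]
        _ ≤ ‖f - g‖ := by
            rw [← ZeroAtInftyContinuousMap.norm_toBCF_eq_norm]
            exact BoundedContinuousFunction.norm_coe_le_norm (f - g).toBCF x
        _ < 1 / 2 := by rwa [dist_eq_norm] at hgdist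
    -- the pattern of x
    set pat : X → Finset (Fin n) := fun x => Finset.univ.filter (fun i => E (k i) x = 1)
      with hpat
    have hgval : ∀ x : X, g x = ∑ i ∈ pat x, c i := by
      intro x
      rw [← hg, eval_sum]
      rw [hpat]
      rw [Finset.sum_filter]
      apply Finset.sum_congr rfl
      intro i _
      rcases h01 (k i) x with h | h
      · simp [ZeroAtInftyContinuousMap.coe_smul, ← hkE i, h]
      · simp [ZeroAtInftyContinuousMap.coe_smul, ← hkE i, h]
    -- φ : value on a pattern
    set φ : Finset (Fin n) → ℤ := fun S => round (∑ i ∈ S, (c i).re) with hφ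
    have hφ0 : φ ∅ = 0 := by simp [hφ]
    -- f x = φ (pat x)
    have hfφ : ∀ x : X, f x = (φ (pat x) : ℂ) := by
      intro x
      obtain ⟨nx, hnx⟩ := hf x
      rw [hnx]
      congr 1
      symm
      rw [hφ]
      apply round_eq_of_abs_lt
      have h1 : ‖(nx : ℂ) - g x‖ < 1 / 2 := by rw [← hnx]; exact hpt x
      have h2 : |((nx : ℂ) - g x).re| ≤ ‖(nx : ℂ) - g x‖ := Complex.abs_re_le_norm _
      have h3 : ((nx : ℂ) - g x).re = (nx : ℝ) - (g x).re := by simp [Complex.sub_re]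
      have h4 : (g x).re = ∑ i ∈ pat x, (c i).re := by
        rw [hgval x, Complex.re_sum]
      rw [h3, h4] at h2
      calc |(∑ i ∈ pat x, (c i).re) - (nx : ℝ)| = |(nx : ℝ) - ∑ i ∈ pat x, (c i).re| :=
            abs_sub_comm _ _
        _ < 1 / 2 := lt_of_le_of_lt h2 h1
    -- the coefficients
    set m : Finset (Fin n) → ℤ := mcoef φ with hm
    have hm0 : m ∅ = 0 := mcoef_empty φ hφ0
    -- the group elements G T
    set G : Finset (Fin n) → C₀(X, ℂ) := fun T =>
      if h : ∃ j : Λ, ∀ x : X, (∏ i ∈ T, E (k i) x) = E j x then E h.choose else 0 with hG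
    have hGmem : ∀ T, G T ∈ AddSubgroup.closure (Set.range E) := by
      intro T
      simp only [hG]
      split
      · exact AddSubgroup.subset_closure ⟨_, rfl⟩
      · exact zero_mem _
    -- product lemma: for nonempty T the product is 0 or some E j, pointwise
    have hprodE : ∀ T : Finset (Fin n), T.Nonempty →
        (∀ x : X, (∏ i ∈ T, E (k i) x) = 0) ∨
        (∃ j : Λ, ∀ x : X, (∏ i ∈ T, E (k i) x) = E j x) := by
      intro T hT
      induction hT using Finset.Nonempty.cons_induction with
      | singleton a => exact Or.inr ⟨k a, fun x => by simp⟩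
      | cons a s ha hs ih =>
        rcases ih with h | ⟨j, h⟩
        · left; intro x; rw [Finset.prod_cons, h x, mul_zero]
        · rcases hmul (k a) j with h2 | ⟨k2, h2⟩
          · left; intro x
            have := congrArg (fun g : C₀(X, ℂ) => g x) h2
            simp only [ZeroAtInftyContinuousMap.coe_mul, Pi.mul_apply,
              ZeroAtInftyContinuousMap.coe_zero, Pi.zero_apply] at this
            rw [Finset.prod_cons, h x, this]
          · right; refine ⟨k2, fun x => ?_⟩
            have := congrArg (fun g : C₀(X, ℂ) => g x) h2
            simp only [ZeroAtInftyContinuousMap.coe_mul, Pi.mul_apply] at this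
            rw [Finset.prod_cons, h x, this]
    have hGval : ∀ (T : Finset (Fin n)), T.Nonempty → ∀ x : X,
        G T x = ∏ i ∈ T, E (k i) x := by
      intro T hT x
      simp only [hG]
      split
      · next h => exact (h.choose_spec x).symm
      · next h =>
        rcases hprodE T hT with h' | h'
        · simp [h' x]
        · exact absurd h' h
    -- the product as an indicator
    have hprodind : ∀ (T : Finset (Fin n)) (x : X),
        (∏ i ∈ T, E (k i) x) = if T ⊆ pat x then 1 else 0 := by
      intro T x
      split
      · next h =>
        apply Finset.prod_eq_one
        intro i hi
        have := h hi
        rw [hpat, Finset.mem_filter] at this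
        exact this.2
      · next h =>
        rw [Finset.not_subset] at h
        obtain ⟨i, hiT, hip⟩ := h
        apply Finset.prod_eq_zero hiT
        rcases h01 (k i) x with h' | h'
        · exact h'
        · exact absurd (Finset.mem_filter.mpr ⟨Finset.mem_univ i, h'⟩) hip
    -- conclude
    have key : f = ∑ T ∈ (Finset.univ : Finset (Fin n)).powerset, m T • G T := by
      ext x
      rw [eval_sum]
      have step : ∀ T ∈ (Finset.univ : Finset (Fin n)).powerset,
          (m T • G T) x = (m T : ℂ) * (if T ⊆ pat x then 1 else 0) := by
        intro T _
        rcases T.eq_empty_or_nonempty with rfl | hT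
        · simp [hm0]
        · rw [ZeroAtInftyContinuousMap.coe_smul, Pi.smul_apply, hGval T hT x,
            hprodind T x, zsmul_eq_mul]
      rw [Finset.sum_congr rfl step]
      have : ∑ T ∈ (Finset.univ : Finset (Fin n)).powerset,
          (m T : ℂ) * (if T ⊆ pat x then 1 else 0)
          = ∑ T ∈ (pat x).powerset, (m T : ℂ) := by
        simp only [mul_ite, mul_one, mul_zero]
        rw [← Finset.sum_filter]
        congr 1
        ext T
        simp [Finset.mem_powerset, Finset.subset_univ]
      rw [this]
      rw [hfφ x]
      rw [← sum_mcoef φ (pat x)]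
      push_cast
      rfl
    rw [key]
    exact sum_mem (fun T _ => zsmul_mem (hGmem T) (m T))
  · intro hf x
    induction hf using AddSubgroup.closure_induction with
    | mem g hg =>
      obtain ⟨i, rfl⟩ := hg
      rcases h01 i x with h | h
      · exact ⟨0, by simp [h]⟩
      · exact ⟨1, by simp [h]⟩
    | zero => exact ⟨0, by simp⟩
    | add a b ha hb iha ihb =>
      obtain ⟨na, hna⟩ := iha
      obtain ⟨nb, hnb⟩ := ihb
      exact ⟨na + nb, by push_cast; simp [hna, hnb]⟩
    | neg a ha iha =>
      obtain ⟨na, hna⟩ := iha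
      exact ⟨-na, by push_cast; simp [hna]⟩
end

section
/- Let Φ : C(Γ̃_A, ℂ) → ℓ^∞(𝒢) be the isometric unital *-homomorphism Φ(f)(j) = f(j, c_j), whose range is R̃_A. Then Φ restricts to a bijection from C(Γ̃_A; ℤ) := {f ∈ C(Γ̃_A, ℂ) : f takes values in ℤ} onto 𝔯̃_A, and to a bijection from {f ∈ C(Γ̃_A; ℤ) : f(p) = 0 for every p ∈ Γ̃_A with p = (⋆, 𝟎)} onto 𝔯_A (here 𝟎 is the identically zero element of {0,1}^𝒢). In other words, 𝔯̃_A ≅ C(Γ̃_A; ℤ) and 𝔯_A ≅ C₀(Γ_A; ℤ) where Γ_A := Γ̃_A \ {(⋆,𝟎)}. -/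
open scoped BoundedContinuousFunction
open OnePoint

noncomputable section

namespace CK

variable {G : Type*}

/-- The `i`-th row of `A` as a complex-valued function on `G`. -/
def rho (A : G → G → Bool) (i : G) : G → ℂ := fun j => if A i j then 1 else 0

/-- The `i`-th row of the identity matrix as a complex-valued function on `G`. -/
def del [DecidableEq G] (i : G) : G → ℂ := fun j => if j = i then 1 else 0

/-- The `j`-th column of `A` as an element of `{0,1}^G`. -/
def col (A : G → G → Bool) (j : G) : G → Bool := fun i => A i j

variable [TopologicalSpace G] [DiscreteTopology G]

/-- `rho A i` as an element of `ℓ^∞(G)`, realized as bounded (continuous) functions on the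
discrete space `G`. -/
def rhoB (A : G → G → Bool) (i : G) : G →ᵇ ℂ :=
  BoundedContinuousFunction.ofNormedAddCommGroupDiscrete (rho A i) 1
    (by intro j; simp only [rho]; split <;> simp)

/-- `del i` as an element of `ℓ^∞(G)`. -/
def delB [DecidableEq G] (i : G) : G →ᵇ ℂ :=
  BoundedContinuousFunction.ofNormedAddCommGroupDiscrete (del i) 1
    (by intro j; simp only [del]; split <;> simp)

/-- The space `Γ̃_A`: the closure of `{(j, c_j) : j ∈ G}` in `G̃ × {0,1}^G`. -/
def GammaT (A : G → G → Bool) : Set (OnePoint G × (G → Bool)) :=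
  closure {p | ∃ j : G, p = ((j : OnePoint G), col A j)}

instance GammaT.compactSpace (A : G → G → Bool) : CompactSpace (GammaT A) :=
  isCompact_iff_compactSpace.mp (isClosed_closure).isCompact

variable [DecidableEq G]

/-- The generators of `R_A`: the rows of `A` and of the identity matrix. -/
def gens (A : G → G → Bool) : Set (G →ᵇ ℂ) :=
  Set.range (rhoB A) ∪ Set.range (delB (G := G))

/-- `R_A`, the smallest closed *-subalgebra of `ℓ^∞(G)` containing the rows of `A` and of the
identity matrix: the closure of the non-unital star subalgebra generated by them. -/
def RA (A : G → G → Bool) : Set (G →ᵇ ℂ) :=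
  closure (NonUnitalStarAlgebra.adjoin ℂ (gens A) : Set (G →ᵇ ℂ))

/-- `R̃_A`, the smallest closed unital *-subalgebra of `ℓ^∞(G)` containing `R_A` and `1`. -/
def RtA (A : G → G → Bool) : StarSubalgebra ℂ (G →ᵇ ℂ) :=
  (StarAlgebra.adjoin ℂ (gens A)).topologicalClosure

/-- The restriction map `Φ : C(Γ̃_A, ℂ) → ℓ^∞(G)`, `Φ(f)(j) = f(j, c_j)`. -/
def Phi (A : G → G → Bool) (f : C(GammaT A, ℂ)) : G →ᵇ ℂ :=
  BoundedContinuousFunction.ofNormedAddCommGroupDiscrete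
    (fun j => f ⟨((j : OnePoint G), col A j), subset_closure ⟨j, rfl⟩⟩) ‖f‖
    (fun j => f.norm_coe_le_norm _)

end CK

namespace CK

/-- The `i`-th row of `A` as an integer-valued function. -/
def rhoZ {G : Type*} (A : G → G → Bool) (i : G) : G → ℤ := fun j => if A i j then 1 else 0

/-- The `i`-th row of the identity matrix as an integer-valued function. -/
def delZ {G : Type*} [DecidableEq G] (i : G) : G → ℤ := fun j => if j = i then 1 else 0

/-- The generators of the ring `𝔯_A`. -/
def gensZ {G : Type*} [DecidableEq G] (A : G → G → Bool) : Set (G → ℤ) :=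
  Set.range (rhoZ A) ∪ Set.range (delZ (G := G))

/-- `𝔯_A`, the (non-unital) subring of `ℤ^G` generated by the rows of `A` and of the identity
matrix. -/
def frakRA {G : Type*} [DecidableEq G] (A : G → G → Bool) : NonUnitalSubring (G → ℤ) :=
  NonUnitalSubring.closure (gensZ A)

/-- `𝔯̃_A`, the subring of `ℤ^G` generated by `𝔯_A` together with the constant function `1`. -/
def frakRtA {G : Type*} [DecidableEq G] (A : G → G → Bool) : Subring (G → ℤ) :=
  Subring.closure (gensZ A)

end CK

namespace CKP

open CK Set

attribute [local instance] Classical.propDecidable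

variable {G : Type*} [TopologicalSpace G] [DiscreteTopology G] [DecidableEq G]

variable (A : G → G → Bool)

/-- The dense family of points `(j, c_j)` of `Γ̃_A`. -/
def pt (j : G) : GammaT A := ⟨((j : OnePoint G), col A j), subset_closure ⟨j, rfl⟩⟩

lemma dense_pt : Dense (Set.range (pt A)) := by
  intro x
  rw [closure_subtype]
  have h : Subtype.val '' (Set.range (pt A))
      = {p | ∃ j : G, p = ((j : OnePoint G), col A j)} := by
    ext p
    constructor
    · rintro ⟨y, ⟨j, rfl⟩, rfl⟩; exact ⟨j, rfl⟩
    · rintro ⟨j, rfl⟩; exact ⟨pt A j, ⟨j, rfl⟩, rfl⟩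
  rw [h]
  exact x.2

/-- The coordinate function `p ↦ p.2 i` as an element of `C(Γ̃_A, ℤ)`. -/
def eI (i : G) : C(GammaT A, ℤ) :=
  ⟨fun p => if (p : OnePoint G × (G → Bool)).2 i then 1 else 0, by
    have h1 : Continuous fun p : GammaT A => (p : OnePoint G × (G → Bool)).2 i :=
      (continuous_apply i).comp (continuous_snd.comp continuous_subtype_val)
    exact (continuous_of_discreteTopology
      (f := fun b : Bool => if b then (1 : ℤ) else 0)).comp h1⟩

lemma isClopen_onePoint_singleton (i : G) : IsClopen {(i : OnePoint G)} := by
  constructor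
  · exact isClosed_singleton
  · rw [← Set.image_singleton]
    exact OnePoint.isOpen_image_coe.mpr (isOpen_discrete _)

/-- The indicator of `p.1 = i` as an element of `C(Γ̃_A, ℤ)`. -/
def dI (i : G) : C(GammaT A, ℤ) :=
  ⟨fun p => if (p : OnePoint G × (G → Bool)).1 = (i : OnePoint G) then 1 else 0, by
    have h1 : Continuous fun p : GammaT A => (p : OnePoint G × (G → Bool)).1 :=
      continuous_fst.comp continuous_subtype_val
    have h2 : Continuous fun x : OnePoint G => if x = (i : OnePoint G) then (1 : ℤ) else 0 := by
      apply Continuous.if ?_ continuous_const continuous_const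
      intro a ha
      have h3 : IsClopen {x : OnePoint G | x = (i : OnePoint G)} := by
        have h4 : {x : OnePoint G | x = (i : OnePoint G)} = {(i : OnePoint G)} := by
          ext x; simp
        rw [h4]; exact isClopen_onePoint_singleton i
      rw [h3.frontier_eq] at ha
      exact ha.elim
    exact h2.comp h1⟩

/-- The generators of the subring of `C(Γ̃_A, ℤ)`. -/
def genC : Set C(GammaT A, ℤ) := Set.range (eI A) ∪ Set.range (dI A)

/-- Evaluation at a point, as a ring hom. -/
def evAt (x : GammaT A) : C(GammaT A, ℤ) →+* ℤ where
  toFun f := f x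
  map_one' := rfl
  map_mul' _ _ := rfl
  map_zero' := rfl
  map_add' _ _ := rfl

/-- Evaluation along the dense family, as a ring hom into `ℤ^G`. -/
def ev : C(GammaT A, ℤ) →+* (G → ℤ) where
  toFun f := fun j => f (pt A j)
  map_one' := rfl
  map_mul' _ _ := rfl
  map_zero' := rfl
  map_add' _ _ := rfl

/-- Evaluation along the dense family, as a non-unital ring hom into `ℤ^G`. -/
def evn : C(GammaT A, ℤ) →ₙ+* (G → ℤ) where
  toFun f := fun j => f (pt A j)
  map_mul' _ _ := rfl
  map_zero' := rfl
  map_add' _ _ := rfl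

/-- A "good" subset of the ambient space: it is open, and its indicator restricted to
`Γ̃_A` lies in the subring generated by the generators. -/
def Good (V : Set (OnePoint G × (G → Bool))) : Prop :=
  IsOpen V ∧ ∃ g : C(GammaT A, ℤ), g ∈ Subring.closure (genC A) ∧
    ∀ p : GammaT A, ((p : OnePoint G × (G → Bool)) ∈ V → g p = 1) ∧
      ((p : OnePoint G × (G → Bool)) ∉ V → g p = 0)

lemma Good_empty : Good A (∅ : Set (OnePoint G × (G → Bool))) :=
  ⟨isOpen_empty, 0, zero_mem _, fun _ => ⟨fun h => absurd h (Set.notMem_empty _), fun _ => rfl⟩⟩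

lemma Good_univ : Good A (Set.univ : Set (OnePoint G × (G → Bool))) :=
  ⟨isOpen_univ, 1, one_mem _, fun _ => ⟨fun _ => rfl, fun h => absurd (Set.mem_univ _) h⟩⟩

lemma Good_inter {V W : Set (OnePoint G × (G → Bool))} (hV : Good A V) (hW : Good A W) :
    Good A (V ∩ W) := by
  obtain ⟨hVo, gV, hgV, hV2⟩ := hV
  obtain ⟨hWo, gW, hgW, hW2⟩ := hW
  refine ⟨hVo.inter hWo, gV * gW, mul_mem hgV hgW, fun p => ⟨?_, ?_⟩⟩
  · rintro ⟨h1, h2⟩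
    simp [ContinuousMap.mul_apply, (hV2 p).1 h1, (hW2 p).1 h2]
  · intro h
    by_cases hpV : (p : OnePoint G × (G → Bool)) ∈ V
    · have hpW : (p : OnePoint G × (G → Bool)) ∉ W := fun hw => h ⟨hpV, hw⟩
      simp [ContinuousMap.mul_apply, (hW2 p).2 hpW]
    · simp [ContinuousMap.mul_apply, (hV2 p).2 hpV]

lemma Good_union {V W : Set (OnePoint G × (G → Bool))} (hV : Good A V) (hW : Good A W) :
    Good A (V ∪ W) := by
  obtain ⟨hVo, gV, hgV, hV2⟩ := hV
  obtain ⟨hWo, gW, hgW, hW2⟩ := hW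
  refine ⟨hVo.union hWo, gV + gW - gV * gW,
    sub_mem (add_mem hgV hgW) (mul_mem hgV hgW), fun p => ⟨?_, ?_⟩⟩
  · intro h
    by_cases h1 : (p : OnePoint G × (G → Bool)) ∈ V <;>
      by_cases h2 : (p : OnePoint G × (G → Bool)) ∈ W
    · simp [ContinuousMap.sub_apply, ContinuousMap.add_apply, ContinuousMap.mul_apply,
        (hV2 p).1 h1, (hW2 p).1 h2]
    · simp [ContinuousMap.sub_apply, ContinuousMap.add_apply, ContinuousMap.mul_apply,
        (hV2 p).1 h1, (hW2 p).2 h2]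
    · simp [ContinuousMap.sub_apply, ContinuousMap.add_apply, ContinuousMap.mul_apply,
        (hV2 p).2 h1, (hW2 p).1 h2]
    · exact absurd (h.elim (fun h' => absurd h' h1) (fun h' => absurd h' h2)) not_false
  · intro h
    have h1 : (p : OnePoint G × (G → Bool)) ∉ V := fun h' => h (Or.inl h')
    have h2 : (p : OnePoint G × (G → Bool)) ∉ W := fun h' => h (Or.inr h')
    simp [ContinuousMap.sub_apply, ContinuousMap.add_apply, ContinuousMap.mul_apply,
      (hV2 p).2 h1, (hW2 p).2 h2]

lemma Good_snd (i : G) (b : Bool) :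
    Good A {p : OnePoint G × (G → Bool) | p.2 i = b} := by
  have hopen : IsOpen {p : OnePoint G × (G → Bool) | p.2 i = b} := by
    have h1 : Continuous fun p : OnePoint G × (G → Bool) => p.2 i :=
      (continuous_apply i).comp continuous_snd
    exact (isOpen_discrete {b}).preimage h1
  cases b with
  | true =>
    refine ⟨hopen, eI A i, Subring.subset_closure (Or.inl ⟨i, rfl⟩), fun p => ⟨?_, ?_⟩⟩
    · intro h; simp only [Set.mem_setOf_eq] at h; simp [eI, h]
    · intro h; simp only [Set.mem_setOf_eq] at h; simp [eI, h]
  | false =>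
    refine ⟨hopen, 1 - eI A i,
      sub_mem (one_mem _) (Subring.subset_closure (Or.inl ⟨i, rfl⟩)), fun p => ⟨?_, ?_⟩⟩
    · intro h; simp only [Set.mem_setOf_eq] at h
      simp [ContinuousMap.sub_apply, eI, h]
    · intro h; simp only [Set.mem_setOf_eq] at h
      simp only [Bool.not_eq_false] at h
      simp [ContinuousMap.sub_apply, eI, h]

lemma Good_fst_eq (i : G) :
    Good A {p : OnePoint G × (G → Bool) | p.1 = (i : OnePoint G)} := by
  have hopen : IsOpen {p : OnePoint G × (G → Bool) | p.1 = (i : OnePoint G)} := by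
    have h0 : {p : OnePoint G × (G → Bool) | p.1 = (i : OnePoint G)}
        = Prod.fst ⁻¹' {(i : OnePoint G)} := rfl
    rw [h0]
    exact (isClopen_onePoint_singleton i).isOpen.preimage continuous_fst
  refine ⟨hopen, dI A i, Subring.subset_closure (Or.inr ⟨i, rfl⟩), fun p => ⟨?_, ?_⟩⟩
  · intro h; simp only [Set.mem_setOf_eq] at h; simp [dI, h]
  · intro h; simp only [Set.mem_setOf_eq] at h; simp [dI, h]

lemma Good_fst_ne (i : G) :
    Good A {p : OnePoint G × (G → Bool) | p.1 ≠ (i : OnePoint G)} := by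
  have hopen : IsOpen {p : OnePoint G × (G → Bool) | p.1 ≠ (i : OnePoint G)} := by
    have h0 : {p : OnePoint G × (G → Bool) | p.1 ≠ (i : OnePoint G)}
        = Prod.fst ⁻¹' ({(i : OnePoint G)}ᶜ) := rfl
    rw [h0]
    exact ((isClopen_onePoint_singleton i).isClosed.isOpen_compl).preimage continuous_fst
  refine ⟨hopen, 1 - dI A i,
    sub_mem (one_mem _) (Subring.subset_closure (Or.inr ⟨i, rfl⟩)), fun p => ⟨?_, ?_⟩⟩
  · intro h; simp only [Set.mem_setOf_eq] at h
    simp [ContinuousMap.sub_apply, dI, h]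
  · intro h; simp only [Set.mem_setOf_eq, not_not] at h
    simp [ContinuousMap.sub_apply, dI, h]

lemma Good_cyl (F : Finset G) (c : G → Bool) :
    Good A {p : OnePoint G × (G → Bool) | ∀ i ∈ F, p.2 i = c i} := by
  classical
  induction F using Finset.induction_on with
  | empty =>
    have h0 : {p : OnePoint G × (G → Bool) | ∀ i ∈ (∅ : Finset G), p.2 i = c i}
        = Set.univ := by ext p; simp
    rw [h0]; exact Good_univ A
  | @insert a F ha ih =>
    have h0 : {p : OnePoint G × (G → Bool) | ∀ i ∈ insert a F, p.2 i = c i}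
        = {p : OnePoint G × (G → Bool) | p.2 a = c a}
          ∩ {p : OnePoint G × (G → Bool) | ∀ i ∈ F, p.2 i = c i} := by
      ext p; simp [Finset.forall_mem_insert]
    rw [h0]
    exact Good_inter A (Good_snd A a (c a)) ih

lemma Good_co (F : Finset G) :
    Good A {p : OnePoint G × (G → Bool) | ∀ j ∈ F, p.1 ≠ (j : OnePoint G)} := by
  classical
  induction F using Finset.induction_on with
  | empty =>
    have h0 : {p : OnePoint G × (G → Bool) | ∀ j ∈ (∅ : Finset G), p.1 ≠ (j : OnePoint G)}
        = Set.univ := by ext p; simp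
    rw [h0]; exact Good_univ A
  | @insert a F ha ih =>
    have h0 : {p : OnePoint G × (G → Bool) | ∀ j ∈ insert a F, p.1 ≠ (j : OnePoint G)}
        = {p : OnePoint G × (G → Bool) | p.1 ≠ (a : OnePoint G)}
          ∩ {p : OnePoint G × (G → Bool) | ∀ j ∈ F, p.1 ≠ (j : OnePoint G)} := by
      ext p; simp [Finset.forall_mem_insert]
    rw [h0]
    exact Good_inter A (Good_fst_ne A a) ih

lemma Good_biUnion {ι : Type*} (t : Finset ι) (V : ι → Set (OnePoint G × (G → Bool)))
    (h : ∀ i ∈ t, Good A (V i)) : Good A (⋃ i ∈ t, V i) := by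
  classical
  revert h
  refine Finset.induction_on t ?_ ?_
  · intro _
    simpa using Good_empty A
  · intro a s ha ih h
    rw [Finset.set_biUnion_insert]
    exact Good_union A (h a (Finset.mem_insert_self a s))
      (ih fun i hi => h i (Finset.mem_insert_of_mem hi))

lemma Good_nbhd {U : Set (OnePoint G × (G → Bool))} (hU : IsOpen U)
    {x : OnePoint G × (G → Bool)} (hx : x ∈ U) :
    ∃ V, Good A V ∧ x ∈ V ∧ V ⊆ U := by
  classical
  obtain ⟨x1, x2⟩ := x
  obtain ⟨u, v, hu, hv, hxu, hxv, huv⟩ := isOpen_prod_iff.mp hU x1 x2 hx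
  obtain ⟨I, w, hw, hI⟩ := isOpen_pi_iff.mp hv x2 hxv
  have hCylsub : ∀ p : OnePoint G × (G → Bool),
      (∀ i ∈ I, p.2 i = x2 i) → p.2 ∈ v := by
    intro p hp
    apply hI
    intro i hi
    have := (hw i hi).2
    rw [hp i hi]
    exact this
  cases x1 with
  | infty =>
    -- the point at infinity
    have hmem : (∞ : OnePoint G) ∈ u := hxu
    obtain ⟨hcpt, -⟩ := (OnePoint.isOpen_iff_of_mem' hmem).mp hu
    have hfin : (((↑) ⁻¹' u : Set G)ᶜ).Finite := hcpt.finite_of_discrete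
    refine ⟨{p : OnePoint G × (G → Bool) | ∀ j ∈ hfin.toFinset, p.1 ≠ (j : OnePoint G)}
      ∩ {p : OnePoint G × (G → Bool) | ∀ i ∈ I, p.2 i = x2 i},
      Good_inter A (Good_co A hfin.toFinset) (Good_cyl A I x2), ⟨?_, ?_⟩, ?_⟩
    · intro j _ h
      exact (Option.some_ne_none j) h.symm
    · intro i _; rfl
    · rintro p ⟨hp1, hp2⟩
      apply huv
      refine Set.mem_prod.mpr ⟨?_, hCylsub p hp2⟩
      cases hp : p.1 with
      | infty => exact hmem
      | coe k =>
        by_cases hk : (k : OnePoint G) ∈ u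
        · exact hk
        · exfalso
          have hkF : k ∈ hfin.toFinset := hfin.mem_toFinset.mpr hk
          exact hp1 k hkF (by rw [hp])
  | coe j =>
    refine ⟨{p : OnePoint G × (G → Bool) | p.1 = ((j : G) : OnePoint G)}
      ∩ {p : OnePoint G × (G → Bool) | ∀ i ∈ I, p.2 i = x2 i},
      Good_inter A (Good_fst_eq A j) (Good_cyl A I x2), ⟨rfl, fun i _ => rfl⟩, ?_⟩
    rintro p ⟨hp1, hp2⟩
    apply huv
    refine Set.mem_prod.mpr ⟨?_, hCylsub p hp2⟩
    rw [hp1]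
    exact hxu

lemma ind_of_clopen {K : Set (GammaT A)} (hK : IsClopen K) :
    ∃ g ∈ Subring.closure (genC A),
      ∀ p : GammaT A, (p ∈ K → g p = 1) ∧ (p ∉ K → g p = 0) := by
  classical
  obtain ⟨U, hUo, hUK⟩ := isOpen_induced_iff.mp hK.isOpen
  have hcpt : IsCompact K := hK.isClosed.isCompact
  have hmemU : ∀ p : K, ((p : GammaT A) : OnePoint G × (G → Bool)) ∈ U := by
    intro p
    have h1 : (p : GammaT A) ∈ K := p.2
    have h2 : (p : GammaT A) ∈ Subtype.val ⁻¹' U := by rw [hUK]; exact h1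
    exact h2
  choose V hV hmemV hsubV using fun p : K => Good_nbhd A hUo (hmemU p)
  have hcover : K ⊆ ⋃ p : K, (Subtype.val ⁻¹' V p : Set (GammaT A)) := by
    intro q hq
    exact Set.mem_iUnion.mpr ⟨⟨q, hq⟩, hmemV ⟨q, hq⟩⟩
  obtain ⟨t, ht⟩ := hcpt.elim_finite_subcover _
    (fun p => (hV p).1.preimage continuous_subtype_val) hcover
  obtain ⟨hWo, g, hgmem, hgind⟩ := Good_biUnion A t V (fun i _ => hV i)
  refine ⟨g, hgmem, fun p => ⟨?_, ?_⟩⟩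
  · intro hp
    obtain ⟨i, hit, hin⟩ := Set.mem_iUnion₂.mp (ht hp)
    exact (hgind p).1 (Set.mem_biUnion hit hin)
  · intro hp
    refine (hgind p).2 fun hmem => hp ?_
    obtain ⟨i, _, hin⟩ := Set.mem_iUnion₂.mp hmem
    rw [← hUK]
    exact hsubV i hin

lemma mem_closure_genC (f : C(GammaT A, ℤ)) : f ∈ Subring.closure (genC A) := by
  classical
  have hfin : (Set.range f).Finite := (isCompact_range f.continuous).finite_of_discrete
  have hclopen : ∀ n : ℤ, IsClopen (f ⁻¹' {n} : Set (GammaT A)) :=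
    fun n => (isClopen_discrete _).preimage f.continuous
  choose g hg hgind using fun n : ℤ => ind_of_clopen A (hclopen n)
  have key : f = ∑ n ∈ hfin.toFinset, (n : C(GammaT A, ℤ)) * g n := by
    ext p
    have h1 : (∑ n ∈ hfin.toFinset, (n : C(GammaT A, ℤ)) * g n) p
        = ∑ n ∈ hfin.toFinset, n * g n p := by
      rw [show (∑ n ∈ hfin.toFinset, (n : C(GammaT A, ℤ)) * g n) p
            = evAt A p (∑ n ∈ hfin.toFinset, (n : C(GammaT A, ℤ)) * g n) from rfl,
        map_sum]
      refine Finset.sum_congr rfl fun n _ => ?_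
      rw [map_mul, map_intCast]
      rfl
    rw [h1]
    rw [Finset.sum_eq_single (f p)]
    · have h2 : g (f p) p = 1 := (hgind (f p) p).1 (by simp)
      rw [h2, mul_one]
    · intro n _ hne
      have h3 : g n p = 0 := (hgind n p).2 (by simp [Ne.symm hne])
      rw [h3, mul_zero]
    · intro hnot
      exact absurd (hfin.mem_toFinset.mpr ⟨p, rfl⟩) hnot
  rw [key]
  exact Subring.sum_mem _ fun n _ =>
    mul_mem (intCast_mem _ n) (hg n)

lemma one_sub_prod_mem {ι : Type*} (t : Finset ι) (g : ι → C(GammaT A, ℤ))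
    (hg : ∀ i ∈ t, g i ∈ NonUnitalSubring.closure (genC A)) :
    1 - ∏ i ∈ t, (1 - g i) ∈ NonUnitalSubring.closure (genC A) := by
  classical
  revert hg
  refine Finset.induction_on t ?_ ?_
  · intro _
    simpa using zero_mem (NonUnitalSubring.closure (genC A))
  · intro a s ha ih hg
    rw [Finset.prod_insert ha]
    have key : (1 : C(GammaT A, ℤ)) - (1 - g a) * ∏ i ∈ s, (1 - g i)
        = ((1 - ∏ i ∈ s, (1 - g i)) + g a)
          - g a * (1 - ∏ i ∈ s, (1 - g i)) := by ring
    rw [key]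
    have hs : 1 - ∏ i ∈ s, (1 - g i) ∈ NonUnitalSubring.closure (genC A) :=
      ih fun i hi => hg i (Finset.mem_insert_of_mem hi)
    have hga : g a ∈ NonUnitalSubring.closure (genC A) := hg a (Finset.mem_insert_self a s)
    exact sub_mem (add_mem hs hga) (mul_mem hga hs)

lemma one_mem_N (hx : ((∞ : OnePoint G), fun _ => false) ∉ GammaT A) :
    (1 : C(GammaT A, ℤ)) ∈ NonUnitalSubring.closure (genC A) := by
  classical
  have hgen : ∀ p : GammaT A, ∃ g ∈ genC A, g p = 1 := by
    intro p
    cases hp1 : (p : OnePoint G × (G → Bool)).1 with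
    | infty =>
      have hne : (p : OnePoint G × (G → Bool)).2 ≠ fun _ => false := by
        intro h2
        apply hx
        have h3 : (p : OnePoint G × (G → Bool)) = ((∞ : OnePoint G), fun _ => false) :=
          Prod.ext hp1 h2
        rw [← h3]
        exact p.2
      obtain ⟨i, hi⟩ : ∃ i, (p : OnePoint G × (G → Bool)).2 i = true := by
        by_contra h
        push_neg at h
        refine hne (funext fun i => ?_)
        have := h i
        simpa using this
      exact ⟨eI A i, Or.inl ⟨i, rfl⟩, by simp [eI, hi]⟩
    | coe j =>
      exact ⟨dI A j, Or.inr ⟨j, rfl⟩, by simp [dI, hp1]⟩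
  choose g hgmem hg1 using hgen
  have hopen : ∀ p : GammaT A, IsOpen {q : GammaT A | g p q = 1} := fun p =>
    (isOpen_discrete {(1 : ℤ)}).preimage (g p).continuous
  have hcover : (Set.univ : Set (GammaT A)) ⊆ ⋃ p, {q | g p q = 1} := fun q _ =>
    Set.mem_iUnion.mpr ⟨q, hg1 q⟩
  obtain ⟨t, ht⟩ := isCompact_univ.elim_finite_subcover _ hopen hcover
  have hmem : 1 - ∏ p ∈ t, (1 - g p) ∈ NonUnitalSubring.closure (genC A) :=
    one_sub_prod_mem A t g fun p _ => NonUnitalSubring.subset_closure (hgmem p)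
  have hone : (1 : C(GammaT A, ℤ)) = 1 - ∏ p ∈ t, (1 - g p) := by
    ext q
    obtain ⟨p, hpt, hpq⟩ := Set.mem_iUnion₂.mp (ht (Set.mem_univ q))
    have hprod : (evAt A q) (∏ p ∈ t, (1 - g p)) = 0 := by
      rw [map_prod]
      refine Finset.prod_eq_zero hpt ?_
      rw [map_sub, map_one]
      have : g p q = 1 := hpq
      rw [show (evAt A q) (g p) = g p q from rfl, this, sub_self]
    have h5 : (1 - ∏ p ∈ t, (1 - g p)) q
        = (evAt A q) (1 - ∏ p ∈ t, (1 - g p)) := rfl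
    rw [h5, map_sub, map_one, hprod, sub_zero]
    rfl
  rw [hone]
  exact hmem

lemma exists_sub_intCast_mem {f : C(GammaT A, ℤ)} (hf : f ∈ Subring.closure (genC A)) :
    ∃ n : ℤ, f - (n : C(GammaT A, ℤ)) ∈ NonUnitalSubring.closure (genC A) := by
  let S' : Subring C(GammaT A, ℤ) :=
    { carrier := {f | ∃ n : ℤ, f - (n : C(GammaT A, ℤ)) ∈ NonUnitalSubring.closure (genC A)}
      zero_mem' := ⟨0, by
        simpa using zero_mem (NonUnitalSubring.closure (genC A))⟩
      one_mem' := ⟨1, by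
        simpa using zero_mem (NonUnitalSubring.closure (genC A))⟩
      add_mem' := by
        rintro a b ⟨m, hm⟩ ⟨n, hn⟩
        refine ⟨m + n, ?_⟩
        have key : a + b - ((m + n : ℤ) : C(GammaT A, ℤ))
            = (a - (m : C(GammaT A, ℤ))) + (b - (n : C(GammaT A, ℤ))) := by
          push_cast
          ring
        rw [key]
        exact add_mem hm hn
      neg_mem' := by
        rintro a ⟨m, hm⟩
        refine ⟨-m, ?_⟩
        have key : -a - ((-m : ℤ) : C(GammaT A, ℤ))
            = -(a - (m : C(GammaT A, ℤ))) := by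
          push_cast
          ring
        rw [key]
        exact neg_mem hm
      mul_mem' := by
        rintro a b ⟨m, hm⟩ ⟨n, hn⟩
        refine ⟨m * n, ?_⟩
        have key : a * b - ((m * n : ℤ) : C(GammaT A, ℤ))
            = (a - (m : C(GammaT A, ℤ))) * (b - (n : C(GammaT A, ℤ)))
              + m • (b - (n : C(GammaT A, ℤ))) + n • (a - (m : C(GammaT A, ℤ))) := by
          rw [zsmul_eq_mul, zsmul_eq_mul]
          push_cast
          ring
        rw [key]
        exact add_mem (add_mem (mul_mem hm hn) (zsmul_mem hn m)) (zsmul_mem hm n) }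
  have hsub : genC A ⊆ (S' : Set C(GammaT A, ℤ)) := by
    intro g hg
    refine ⟨0, ?_⟩
    simpa using NonUnitalSubring.subset_closure hg
  exact Subring.closure_le.mpr hsub hf

/-- Functions in the non-unital closure vanish at `(∞, 0)`. -/
lemma vanish_of_mem_N {g : C(GammaT A, ℤ)} (hg : g ∈ NonUnitalSubring.closure (genC A)) :
    ∀ p : GammaT A, (p : OnePoint G × (G → Bool)) = ((∞ : OnePoint G), fun _ => false) →
      g p = 0 := by
  intro p hp
  let Z : NonUnitalSubring C(GammaT A, ℤ) :=
    { carrier := {h | h p = 0}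
      zero_mem' := rfl
      add_mem' := by
        intro a b ha hb
        have ha' : a p = 0 := ha
        have hb' : b p = 0 := hb
        show (a + b) p = 0
        rw [ContinuousMap.add_apply, ha', hb', add_zero]
      neg_mem' := by
        intro a ha
        have ha' : a p = 0 := ha
        show (-a) p = 0
        rw [ContinuousMap.neg_apply, ha', neg_zero]
      mul_mem' := by
        intro a b ha hb
        have hb' : b p = 0 := hb
        show (a * b) p = 0
        rw [ContinuousMap.mul_apply, hb', mul_zero] }
  have hsub : genC A ⊆ (Z : Set C(GammaT A, ℤ)) := by
    rintro g' (⟨i, rfl⟩ | ⟨i, rfl⟩)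
    · show eI A i p = 0
      simp [eI, hp]
    · show dI A i p = 0
      simp [dI, hp]
  exact NonUnitalSubring.closure_le.mpr hsub hg

lemma mem_N_of_vanish {f : C(GammaT A, ℤ)}
    (hf : ∀ p : GammaT A,
      (p : OnePoint G × (G → Bool)) = ((∞ : OnePoint G), fun _ => false) → f p = 0) :
    f ∈ NonUnitalSubring.closure (genC A) := by
  obtain ⟨n, hn⟩ := exists_sub_intCast_mem A (mem_closure_genC A f)
  by_cases hx : ((∞ : OnePoint G), fun _ => false) ∈ GammaT A
  · set p0 : GammaT A := ⟨((∞ : OnePoint G), fun _ => false), hx⟩ with hp0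
    have h1 : f p0 = 0 := hf p0 rfl
    have h2 : (f - (n : C(GammaT A, ℤ))) p0 = -n := by
      rw [show (f - (n : C(GammaT A, ℤ))) p0 = evAt A p0 (f - (n : C(GammaT A, ℤ))) from rfl,
        map_sub, map_intCast]
      rw [show evAt A p0 f = f p0 from rfl, h1, zero_sub, Int.cast_id]
    have h3 : (f - (n : C(GammaT A, ℤ))) p0 = 0 := vanish_of_mem_N A hn p0 rfl
    have hn0 : n = 0 := by
      have := h2.symm.trans h3
      linarith
    rw [hn0] at hn
    simpa using hn
  · have h1 : (1 : C(GammaT A, ℤ)) ∈ NonUnitalSubring.closure (genC A) := one_mem_N A hx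
    have h2 : ((n : ℤ) : C(GammaT A, ℤ)) ∈ NonUnitalSubring.closure (genC A) := by
      have h3 := zsmul_mem h1 n
      rwa [zsmul_one] at h3
    have h4 := add_mem hn h2
    rwa [sub_add_cancel] at h4

lemma ev_eI (i : G) : ev A (eI A i) = rhoZ A i := by
  funext j
  show (if col A j i then (1 : ℤ) else 0) = if A i j then 1 else 0
  rfl

lemma ev_dI (i : G) : ev A (dI A i) = delZ i := by
  funext j
  show (if ((j : OnePoint G) = (i : OnePoint G)) then (1 : ℤ) else 0) = if j = i then 1 else 0
  by_cases h : j = i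
  · simp [h]
  · rw [if_neg h, if_neg (fun hc => h (OnePoint.coe_eq_coe.mp hc))]

lemma ev_image_genC : ev A '' genC A = gensZ A := by
  ext h
  constructor
  · rintro ⟨g, hg, rfl⟩
    rcases hg with ⟨i, rfl⟩ | ⟨i, rfl⟩
    · rw [ev_eI]
      exact Or.inl ⟨i, rfl⟩
    · rw [ev_dI]
      exact Or.inr ⟨i, rfl⟩
  · rintro (⟨i, rfl⟩ | ⟨i, rfl⟩)
    · exact ⟨eI A i, Or.inl ⟨i, rfl⟩, ev_eI A i⟩
    · exact ⟨dI A i, Or.inr ⟨i, rfl⟩, ev_dI A i⟩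

lemma evn_image_genC : evn A '' genC A = gensZ A := by
  have h : (evn A : C(GammaT A, ℤ) → (G → ℤ)) = (ev A : C(GammaT A, ℤ) → (G → ℤ)) := rfl
  rw [Set.image_congr' (fun g => congrFun h g) ]
  exact ev_image_genC A

lemma mem_frakRtA_iff {h : G → ℤ} :
    h ∈ frakRtA A ↔ ∃ f ∈ Subring.closure (genC A), ev A f = h := by
  have h1 : frakRtA A = (Subring.closure (genC A)).map (ev A) := by
    rw [RingHom.map_closure, ev_image_genC]
    rfl
  rw [h1, Subring.mem_map]

lemma mem_frakRA_iff {h : G → ℤ} :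
    h ∈ frakRA A ↔ ∃ f ∈ NonUnitalSubring.closure (genC A), evn A f = h := by
  have h1 : frakRA A = (NonUnitalSubring.closure (genC A)).map (evn A) := by
    rw [NonUnitalRingHom.map_closure, evn_image_genC]
    rfl
  rw [h1, NonUnitalSubring.mem_map]

lemma exists_int_map {α : Type*} [TopologicalSpace α] (f : C(α, ℂ))
    (hf : ∀ p, ∃ n : ℤ, f p = (n : ℂ)) :
    ∃ g : C(α, ℤ), ∀ p, f p = ((g p : ℤ) : ℂ) := by
  have key : ∀ p, f p = ((⌊(f p).re⌋ : ℤ) : ℂ) := by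
    intro p
    obtain ⟨n, hn⟩ := hf p
    rw [hn]
    norm_num
  refine ⟨⟨fun p => ⌊(f p).re⌋, ?_⟩, fun p => by exact key p⟩
  rw [continuous_iff_continuousAt]
  intro p
  have hev : ∀ᶠ q in nhds p, ⌊(f q).re⌋ = ⌊(f p).re⌋ := by
    have h2 : ∀ᶠ q in nhds p, f q ∈ Metric.ball (f p) 1 :=
      f.continuous.continuousAt (Metric.ball_mem_nhds _ one_pos)
    filter_upwards [h2] with q hq
    obtain ⟨m, hm⟩ := hf q
    obtain ⟨n, hn⟩ := hf p
    have hmn : m = n := by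
      by_contra hne
      have h3 : dist ((m : ℂ)) ((n : ℂ)) < 1 := by
        rw [← hm, ← hn]
        exact hq
      have h4 : (1 : ℝ) ≤ dist ((m : ℂ)) ((n : ℂ)) := by
        rw [dist_eq_norm]
        have h5 : ((m : ℂ) - n) = (((m - n : ℤ) : ℝ) : ℂ) := by push_cast; ring
        rw [h5, Complex.norm_real, Real.norm_eq_abs, ← Int.cast_abs]
        exact_mod_cast Int.one_le_abs (sub_ne_zero.mpr hne)
      linarith
    rw [hm, hn, hmn]
  exact Filter.EventuallyEq.continuousAt hev

end CKP
/-- `Φ` restricts to a bijection from `C(Γ̃_A; ℤ)` onto (the copy in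
`ℓ^∞(G)` of) `𝔯̃_A`, and from the integer-valued continuous functions vanishing at `(⋆, 𝟎)`
onto `𝔯_A`; that is, `𝔯̃_A ≅ C(Γ̃_A; ℤ)` and `𝔯_A ≅ C₀(Γ_A; ℤ)`. -/
theorem stmt_10 {G : Type*} [Nonempty G] [TopologicalSpace G] [DiscreteTopology G]
    [DecidableEq G] (A : G → G → Bool) (hA : ∀ i : G, ∃ j : G, A i j = true) :
    Set.InjOn (CK.Phi A) {f : C(CK.GammaT A, ℂ) | ∀ p, ∃ n : ℤ, f p = (n : ℂ)} ∧
    CK.Phi A '' {f : C(CK.GammaT A, ℂ) | ∀ p, ∃ n : ℤ, f p = (n : ℂ)} =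
      {g : G →ᵇ ℂ | ∃ h ∈ CK.frakRtA A, ∀ j : G, g j = ((h j : ℤ) : ℂ)} ∧
    CK.Phi A '' {f : C(CK.GammaT A, ℂ) |
        (∀ p, ∃ n : ℤ, f p = (n : ℂ)) ∧
        ∀ p : CK.GammaT A,
          (p : OnePoint G × (G → Bool)) = (∞, fun _ => false) → f p = 0} =
      {g : G →ᵇ ℂ | ∃ h ∈ CK.frakRA A, ∀ j : G, g j = ((h j : ℤ) : ℂ)} := by
  have hphi_apply : ∀ (f : C(CK.GammaT A, ℂ)) (j : G), CK.Phi A f j = f (CKP.pt A j) :=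
    fun f j => rfl
  refine ⟨?_, ?_, ?_⟩
  · -- injectivity
    intro f1 _ f2 _ h
    refine ContinuousMap.coe_injective
      (Continuous.ext_on (CKP.dense_pt A) f1.continuous f2.continuous ?_)
    rintro x ⟨j, rfl⟩
    have := DFunLike.congr_fun h j
    rwa [hphi_apply, hphi_apply] at this
  · -- unital case
    apply Set.Subset.antisymm
    · rintro g ⟨f, hfInt, rfl⟩
      obtain ⟨g', hg'⟩ := CKP.exists_int_map f hfInt
      refine ⟨CKP.ev A g', (CKP.mem_frakRtA_iff A).mpr ⟨g', CKP.mem_closure_genC A g', rfl⟩, ?_⟩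
      intro j
      rw [hphi_apply, hg' (CKP.pt A j)]
      rfl
    · rintro g ⟨h, hh, hgh⟩
      obtain ⟨f', hf', hev⟩ := (CKP.mem_frakRtA_iff A).mp hh
      refine ⟨⟨fun p => ((f' p : ℤ) : ℂ),
        (continuous_of_discreteTopology (f := (Int.cast : ℤ → ℂ))).comp f'.continuous⟩,
        fun p => ⟨f' p, rfl⟩, ?_⟩
      apply BoundedContinuousFunction.ext
      intro j
      rw [hphi_apply, hgh j, ← hev]
      rfl
  · -- non-unital case
    apply Set.Subset.antisymm
    · rintro g ⟨f, ⟨hfInt, hfVan⟩, rfl⟩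
      obtain ⟨g', hg'⟩ := CKP.exists_int_map f hfInt
      have hg'Van : ∀ p : CK.GammaT A,
          (p : OnePoint G × (G → Bool)) = (∞, fun _ => false) → g' p = 0 := by
        intro p hp
        have h1 : ((g' p : ℤ) : ℂ) = 0 := by
          rw [← hg' p]
          exact hfVan p hp
        exact_mod_cast h1
      refine ⟨CKP.evn A g',
        (CKP.mem_frakRA_iff A).mpr ⟨g', CKP.mem_N_of_vanish A hg'Van, rfl⟩, ?_⟩
      intro j
      rw [hphi_apply, hg' (CKP.pt A j)]
      rfl
    · rintro g ⟨h, hh, hgh⟩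
      obtain ⟨f', hf', hev⟩ := (CKP.mem_frakRA_iff A).mp hh
      refine ⟨⟨fun p => ((f' p : ℤ) : ℂ),
        (continuous_of_discreteTopology (f := (Int.cast : ℤ → ℂ))).comp f'.continuous⟩,
        ⟨fun p => ⟨f' p, rfl⟩, ?_⟩, ?_⟩
      · intro p hp
        have h1 : f' p = 0 := CKP.vanish_of_mem_N A hf' p hp
        show ((f' p : ℤ) : ℂ) = 0
        rw [h1]
        exact Int.cast_zero
      · apply BoundedContinuousFunction.ext
        intro j
        rw [hphi_apply, hgh j, ← hev]
        rfl
end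
end

section
/- Every continuous function f : Ω̃_A → ℤ (where Ω̃_A carries the subspace topology from {0,1}^𝔽 and ℤ is discrete) is a finite ℤ-linear combination of characteristic functions of sets of the form D(μ, X), where μ ranges over admissible words and X over finite subsets of 𝒢 containing the last letter of μ whenever μ ≠ e. -/
open OnePoint

noncomputable section

namespace CKO

variable {G : Type*}

/-- The submonoid `𝔽⁺` of the free group generated by the generators. -/
def pos (G : Type*) : Submonoid (FreeGroup G) :=
  Submonoid.closure (Set.range (FreeGroup.of : G → FreeGroup G))

/-- The defining relations of `Ω_A^τ` for a subset `ξ ⊆ 𝔽`, identified with a point of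
`{0,1}^𝔽`: (a) `e ∈ ξ` and `ξ` contains every initial subword (prefix of the reduced word) of
each of its elements; (b) each `ω ∈ ξ` has at most one `y ∈ G` with `ωy ∈ ξ`; (c) if
`ω, ωy ∈ ξ` then `ωx⁻¹ ∈ ξ ↔ A(x,y) = 1`. -/
def IsCK [DecidableEq G] (A : G → G → Bool) (ξ : FreeGroup G → Bool) : Prop :=
  ξ 1 = true ∧
  (∀ ω : FreeGroup G, ξ ω = true → ∀ p : List (G × Bool), p <+: ω.toWord →
    ξ (FreeGroup.mk p) = true) ∧
  (∀ ω : FreeGroup G, ξ ω = true → ∀ y z : G,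
    ξ (ω * FreeGroup.of y) = true → ξ (ω * FreeGroup.of z) = true → y = z) ∧
  (∀ ω : FreeGroup G, ξ ω = true → ∀ y : G, ξ (ω * FreeGroup.of y) = true →
    ∀ x : G, (ξ (ω * (FreeGroup.of x)⁻¹) = true ↔ A x y = true))

/-- `ξ` is unbounded: it has no upper bound in `𝔽` for the left order `s ≤ t ↔ s⁻¹t ∈ 𝔽⁺`. -/
def Unbounded (ξ : FreeGroup G → Bool) : Prop :=
  ¬ ∃ t : FreeGroup G, ∀ s : FreeGroup G, ξ s = true → s⁻¹ * t ∈ pos G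

/-- `Ω̃_A`: the closure in `{0,1}^𝔽` of the set of unbounded elements of `Ω_A^τ`. -/
def OmegaT [DecidableEq G] (A : G → G → Bool) : Set (FreeGroup G → Bool) :=
  closure {ξ | IsCK A ξ ∧ Unbounded ξ}

end CKO

namespace CKO

variable {G : Type*}

/-- The element of `𝔽⁺` associated to a word in the generators. -/
def wordProd (μ : List G) : FreeGroup G := (μ.map FreeGroup.of).prod

/-- `μ` is an admissible word: consecutive letters are allowed transitions of `A`. -/
def Admissible (A : G → G → Bool) (μ : List G) : Prop :=
  μ.Chain' fun a b => A a b = true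

/-- `X` contains the last letter of `μ` whenever `μ ≠ e`. -/
def LastMem [DecidableEq G] (μ : List G) (X : Finset G) : Prop :=
  ∀ l : G, μ.getLast? = Option.some l → l ∈ X

/-- The set `D(μ, X) = {ξ ∈ Ω̃_A : μ ∈ ξ and μx⁻¹ ∈ ξ for every x ∈ X}`. -/
def D [DecidableEq G] (A : G → G → Bool) (μ : List G) (X : Finset G) :
    Set (FreeGroup G → Bool) :=
  {ξ | ξ ∈ OmegaT A ∧ ξ (wordProd μ) = true ∧
    ∀ x ∈ X, ξ (wordProd μ * (FreeGroup.of x)⁻¹) = true}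

end CKO


namespace CKOAux
open FreeGroup

variable {G : Type*} [DecidableEq G]

/-- the no-cancellation relation: `(a,b)` followed by `(c,d)` doesn't cancel. -/
def rcond : (G × Bool) → (G × Bool) → Prop := fun a b => ¬(a.1 = b.1 ∧ a.2 = !b.2)

theorem reduce_eq_iff_chain (L : List (G × Bool)) :
    FreeGroup.reduce L = L ↔ List.Chain' rcond L := by
  induction L with
  | nil => simp; exact List.isChain_nil
  | cons x M ih =>
    constructor
    · intro h
      rw [FreeGroup.reduce.cons] at h
      rcases hM : FreeGroup.reduce M with _ | ⟨y, ys⟩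
      · rw [hM] at h
        have h' : [x] = x :: M := h
        have : M = [] := by
          have := congrArg List.length h'
          simp at this
          simpa [List.length_eq_zero_iff] using this.symm
        subst this; exact List.isChain_singleton _
      · rw [hM] at h
        have h' : (if x.1 = y.1 ∧ x.2 = !y.2 then ys else x :: y :: ys) = x :: M := h
        by_cases hc : x.1 = y.1 ∧ x.2 = !y.2
        · rw [if_pos hc] at h'
          exfalso
          have hlen : (FreeGroup.reduce M).length ≤ M.length :=
            FreeGroup.Red.length_le (FreeGroup.reduce.red)
          rw [hM] at hlen
          simp at hlen
          have := congrArg List.length h'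
          simp at this
          omega
        · rw [if_neg hc] at h'
          have hMeq : M = y :: ys := by
            simpa using h'.symm
          have hred : FreeGroup.reduce M = M := by rw [hM, hMeq]
          have hch := ih.mp hred
          rw [hMeq]
          exact List.isChain_cons_cons.mpr ⟨hc, hMeq ▸ hch⟩
    · intro h
      rcases M with _ | ⟨y, ys⟩
      · simp [FreeGroup.reduce]
      · have hch := List.isChain_cons_cons.mp h
        have hred : FreeGroup.reduce (y :: ys) = y :: ys := ih.mpr hch.2
        rw [FreeGroup.reduce.cons, hred]
        show (if x.1 = y.1 ∧ x.2 = !y.2 then ys else x :: y :: ys) = x :: y :: ys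
        rw [if_neg hch.1]

theorem toWord_chain (w : FreeGroup G) : List.Chain' rcond w.toWord :=
  (reduce_eq_iff_chain _).mp (FreeGroup.reduce_toWord w)

theorem toWord_mk_of_chain {L : List (G × Bool)} (h : List.Chain' rcond L) :
    (FreeGroup.mk L).toWord = L := by
  rw [FreeGroup.toWord_mk, (reduce_eq_iff_chain L).mpr h]


/-! ### word product lemmas -/

theorem wordProd_nil : CKO.wordProd ([] : List G) = 1 := rfl

theorem wordProd_append (μ ν : List G) :
    CKO.wordProd (μ ++ ν) = CKO.wordProd μ * CKO.wordProd ν := by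
  simp [CKO.wordProd]

theorem wordProd_concat (μ : List G) (a : G) :
    CKO.wordProd (μ ++ [a]) = CKO.wordProd μ * FreeGroup.of a := by
  simp [CKO.wordProd]

theorem wordProd_eq_mk (μ : List G) :
    CKO.wordProd μ = FreeGroup.mk (μ.map fun a => (a, true)) := by
  induction μ with
  | nil => simpa [CKO.wordProd] using FreeGroup.one_eq_mk
  | cons a μ ih =>
    have : CKO.wordProd (a :: μ) = FreeGroup.of a * CKO.wordProd μ := by
      simp [CKO.wordProd]
    rw [this, ih]
    show FreeGroup.mk [(a, true)] * FreeGroup.mk (μ.map fun a => (a, true)) = _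
    rw [FreeGroup.mul_mk]
    rfl

theorem inv_of_eq (z : G) : (FreeGroup.of z)⁻¹ = FreeGroup.mk [(z, false)] := by
  show (FreeGroup.mk [(z, true)])⁻¹ = _
  rw [FreeGroup.inv_mk]
  rfl

theorem mk_concat_neg (M : List (G × Bool)) (z : G) :
    FreeGroup.mk (M ++ [(z, false)]) = FreeGroup.mk M * (FreeGroup.of z)⁻¹ := by
  rw [inv_of_eq, FreeGroup.mul_mk]

theorem chain_pos (μ : List G) : List.Chain' rcond (μ.map fun a => (a, true)) := by
  induction μ with
  | nil => exact List.isChain_nil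
  | cons a μ ih =>
    cases μ with
    | nil => exact List.isChain_singleton _
    | cons b ν =>
      refine List.isChain_cons_cons.mpr ⟨?_, ih⟩
      simp [rcond]

theorem toWord_wordProd (μ : List G) :
    (CKO.wordProd μ).toWord = μ.map fun a => (a, true) := by
  rw [wordProd_eq_mk]
  exact toWord_mk_of_chain (chain_pos μ)

theorem toWord_posneg (μ : List G) (x z : G) (hxz : x ≠ z) :
    (CKO.wordProd (μ ++ [x]) * (FreeGroup.of z)⁻¹).toWord
      = ((μ ++ [x]).map fun a => (a, true)) ++ [(z, false)] := by
  rw [wordProd_eq_mk, ← mk_concat_neg]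
  refine toWord_mk_of_chain ?_
  rw [List.Chain', List.isChain_append]
  refine ⟨chain_pos _, List.isChain_singleton _, ?_⟩
  intro u hu v hv
  simp at hv
  subst hv
  simp at hu
  subst hu
  simp [rcond, hxz]

theorem toWord_negneg (ρ : FreeGroup G) (P : List (G × Bool)) (x z : G)
    (hρ : ρ.toWord = P ++ [(x, false)]) :
    (ρ * (FreeGroup.of z)⁻¹).toWord = P ++ [(x, false), (z, false)] := by
  have h1 : ρ * (FreeGroup.of z)⁻¹ = FreeGroup.mk (ρ.toWord ++ [(z, false)]) := by
    rw [mk_concat_neg, FreeGroup.mk_toWord]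
  rw [h1, hρ]
  have hch : List.Chain' rcond ((P ++ [(x, false)]) ++ [(z, false)]) := by
    rw [List.Chain', List.isChain_append]
    refine ⟨hρ ▸ toWord_chain ρ, List.isChain_singleton _, ?_⟩
    intro u hu v hv
    simp at hv
    subst hv
    simp at hu
    subst hu
    simp [rcond]
  have := toWord_mk_of_chain hch
  rw [List.append_assoc] at this ⊢
  exact this

theorem toWord_ne_cancel (w : FreeGroup G) (p r : List (G × Bool)) (x : G) (b : Bool) :
    w.toWord ≠ p ++ (x, b) :: (x, !b) :: r := by
  intro h
  have hch := toWord_chain w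
  rw [h, List.Chain', List.isChain_append] at hch
  have := List.isChain_cons_cons.mp hch.2.1
  exact this.1 ⟨rfl, by simp⟩


/-! ### IsCK is a closed condition -/

theorem isClosed_apply (w : FreeGroup G) (b : Bool) :
    IsClosed {ξ : FreeGroup G → Bool | ξ w = b} := by
  have h : {ξ : FreeGroup G → Bool | ξ w = b} = (fun ξ : FreeGroup G → Bool => ξ w) ⁻¹' {b} :=
    rfl
  rw [h]
  exact (isClosed_discrete {b}).preimage (continuous_apply w)

theorem isClosed_isCK (A : G → G → Bool) : IsClosed {ξ : FreeGroup G → Bool | CKO.IsCK A ξ} := by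
  have hrw : {ξ : FreeGroup G → Bool | CKO.IsCK A ξ} =
      {ξ : FreeGroup G → Bool | ξ 1 = true} ∩
      ((⋂ (ω : FreeGroup G) (p : List (G × Bool)) (_ : p <+: ω.toWord),
        ({ξ : FreeGroup G → Bool | ξ ω = false} ∪ {ξ | ξ (FreeGroup.mk p) = true})) ∩
      ((⋂ (ω : FreeGroup G) (y : G) (z : G) (_ : y ≠ z),
        ({ξ : FreeGroup G → Bool | ξ ω = false} ∪ ({ξ | ξ (ω * FreeGroup.of y) = false} ∪
          {ξ | ξ (ω * FreeGroup.of z) = false}))) ∩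
      (⋂ (ω : FreeGroup G) (y : G) (x : G),
        ({ξ : FreeGroup G → Bool | ξ ω = false} ∪ ({ξ | ξ (ω * FreeGroup.of y) = false} ∪
          {ξ | ξ (ω * (FreeGroup.of x)⁻¹) = A x y}))))) := by
    ext ξ
    simp only [Set.mem_setOf_eq, Set.mem_inter_iff, Set.mem_iInter, Set.mem_union,
      Set.mem_setOf_eq, CKO.IsCK]
    refine and_congr Iff.rfl (and_congr ?_ (and_congr ?_ ?_))
    · constructor
      · intro h ω p hp
        by_cases hb : ξ ω = true
        · exact Or.inr (h ω hb p hp)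
        · exact Or.inl (by simpa using hb)
      · intro h ω hω p hp
        rcases h ω p hp with hb | hb
        · rw [hω] at hb; exact absurd hb (by simp)
        · exact hb
    · constructor
      · intro h ω y z hyz
        by_cases hb : ξ ω = true
        · by_cases hy : ξ (ω * FreeGroup.of y) = true
          · by_cases hz : ξ (ω * FreeGroup.of z) = true
            · exact absurd (h ω hb y z hy hz) hyz
            · exact Or.inr (Or.inr (by simpa using hz))
          · exact Or.inr (Or.inl (by simpa using hy))
        · exact Or.inl (by simpa using hb)
      · intro h ω hω y z hy hz
        by_contra hyz
        rcases h ω y z hyz with hb | hb | hb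
        · rw [hω] at hb; exact absurd hb (by simp)
        · rw [hy] at hb; exact absurd hb (by simp)
        · rw [hz] at hb; exact absurd hb (by simp)
    · constructor
      · intro h ω y x
        by_cases hb : ξ ω = true
        · by_cases hy : ξ (ω * FreeGroup.of y) = true
          · refine Or.inr (Or.inr ?_)
            have hiff := h ω hb y hy x
            by_cases hA : A x y = true
            · rw [hA]; exact hiff.mpr hA
            · have hA' : A x y = false := by simpa using hA
              rw [hA']
              by_cases hx : ξ (ω * (FreeGroup.of x)⁻¹) = true
              · exact absurd (hiff.mp hx) hA
              · simpa using hx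
          · exact Or.inr (Or.inl (by simpa using hy))
        · exact Or.inl (by simpa using hb)
      · intro h ω hω y hy x
        rcases h ω y x with hb | hb | hb
        · rw [hω] at hb; exact absurd hb (by simp)
        · rw [hy] at hb; exact absurd hb (by simp)
        · rw [hb]
  rw [hrw]
  refine (isClosed_apply 1 true).inter (IsClosed.inter ?_ (IsClosed.inter ?_ ?_))
  · exact isClosed_iInter fun ω => isClosed_iInter fun p => isClosed_iInter fun _ =>
      ((isClosed_apply ω false).union (isClosed_apply _ true))
  · exact isClosed_iInter fun ω => isClosed_iInter fun y => isClosed_iInter fun z =>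
      isClosed_iInter fun _ => ((isClosed_apply ω false).union
        ((isClosed_apply _ false).union (isClosed_apply _ false)))
  · exact isClosed_iInter fun ω => isClosed_iInter fun y => isClosed_iInter fun x =>
      ((isClosed_apply ω false).union
        ((isClosed_apply _ false).union (isClosed_apply _ _)))

theorem omegaT_isCK {A : G → G → Bool} {ξ : FreeGroup G → Bool} (hξ : ξ ∈ CKO.OmegaT A) :
    CKO.IsCK A ξ :=
  closure_minimal (fun _ h => h.1) (isClosed_isCK A) hξ


/-! ### consequences of IsCK -/

section CKfacts

variable {A : G → G → Bool} {ξ : FreeGroup G → Bool} (h : CKO.IsCK A ξ)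

include h

theorem ck_prefix_gen {w : FreeGroup G} (hw : ξ w = true) {p : List (G × Bool)}
    (hp : p <+: w.toWord) : ξ (FreeGroup.mk p) = true :=
  h.2.1 w hw p hp

theorem ck_prefix {μ ν : List G} (hp : μ <+: ν) (hν : ξ (CKO.wordProd ν) = true) :
    ξ (CKO.wordProd μ) = true := by
  have := ck_prefix_gen h hν (p := μ.map fun a => (a, true))
    (by rw [toWord_wordProd]; exact hp.map _)
  rwa [← wordProd_eq_mk] at this

theorem ck_chain : ∀ (μ : List G) (τ ν : List G),
    ξ (CKO.wordProd (τ ++ μ)) = true → ξ (CKO.wordProd (τ ++ ν)) = true →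
      μ <+: ν ∨ ν <+: μ := by
  intro μ
  induction μ with
  | nil => intro τ ν _ _; exact Or.inl (List.nil_prefix)
  | cons a μ' ih =>
    intro τ ν hμ hν
    cases ν with
    | nil => exact Or.inr (List.nil_prefix)
    | cons b ν' =>
      have hτ : ξ (CKO.wordProd τ) = true := ck_prefix h (List.prefix_append τ _) hμ
      have hτa : ξ (CKO.wordProd τ * FreeGroup.of a) = true := by
        rw [← wordProd_concat]
        exact ck_prefix h (by simpa using (List.prefix_append (τ ++ [a]) μ')) hμ
      have hτb : ξ (CKO.wordProd τ * FreeGroup.of b) = true := by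
        rw [← wordProd_concat]
        exact ck_prefix h (by simpa using (List.prefix_append (τ ++ [b]) ν')) hν
      have hab : a = b := h.2.2.1 _ hτ a b hτa hτb
      subst hab
      have h1 : ξ (CKO.wordProd ((τ ++ [a]) ++ μ')) = true := by simpa using hμ
      have h2 : ξ (CKO.wordProd ((τ ++ [a]) ++ ν')) = true := by simpa using hν
      rcases ih (τ ++ [a]) ν' h1 h2 with hc | hc
      · exact Or.inl (List.cons_prefix_cons.mpr ⟨rfl, hc⟩)
      · exact Or.inr (List.cons_prefix_cons.mpr ⟨rfl, hc⟩)

theorem ck_admissible {μ : List G} (hμ : ξ (CKO.wordProd μ) = true) : CKO.Admissible A μ := by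
  induction μ using List.reverseRecOn with
  | nil => exact List.isChain_nil
  | append_singleton ρ z ih =>
    have hρ : ξ (CKO.wordProd ρ) = true := ck_prefix h (List.prefix_append ρ [z]) hμ
    have hch := ih hρ
    rw [CKO.Admissible, List.Chain', List.isChain_append]
    refine ⟨hch, List.isChain_singleton _, ?_⟩
    intro u hu v hv
    simp at hv
    subst hv
    rcases List.getLast?_eq_some_iff.mp hu with ⟨ρ', hρ'⟩
    subst hρ'
    have hsucc : ξ (CKO.wordProd (ρ' ++ [u]) * FreeGroup.of z) = true := by
      rw [← wordProd_concat]; exact hμ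
    have hiff := h.2.2.2 _ hρ z hsucc u
    apply hiff.mp
    have : CKO.wordProd (ρ' ++ [u]) * (FreeGroup.of u)⁻¹ = CKO.wordProd ρ' := by
      rw [wordProd_concat, mul_inv_cancel_right]
    rw [this]
    exact ck_prefix h (List.prefix_append ρ' [u]) hρ

theorem ck_bad {w : FreeGroup G} {p r : List (G × Bool)} {x y : G}
    (hw : w.toWord = p ++ (x, false) :: (y, true) :: r) (hwξ : ξ w = true) : False := by
  have h1 : ξ (FreeGroup.mk (p ++ [(x, false)])) = true := by
    refine ck_prefix_gen h hwξ ⟨(y, true) :: r, ?_⟩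
    rw [hw]; simp
  have hmkp : ξ (FreeGroup.mk p) = true :=
    ck_prefix_gen h hwξ (by rw [hw]; exact ⟨_, rfl⟩)
  have hx : ξ (FreeGroup.mk (p ++ [(x, false)]) * FreeGroup.of x) = true := by
    have : FreeGroup.mk (p ++ [(x, false)]) * FreeGroup.of x = FreeGroup.mk p := by
      rw [mk_concat_neg, inv_mul_cancel_right]
    rw [this]; exact hmkp
  have hy : ξ (FreeGroup.mk (p ++ [(x, false)]) * FreeGroup.of y) = true := by
    have : FreeGroup.mk (p ++ [(x, false)]) * FreeGroup.of y
        = FreeGroup.mk (p ++ [(x, false), (y, true)]) := by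
      show _ * FreeGroup.mk [(y, true)] = _
      rw [FreeGroup.mul_mk]
      simp
    rw [this]
    refine ck_prefix_gen h hwξ ⟨r, ?_⟩
    rw [hw]; simp
  have hxy : x = y := h.2.2.1 _ h1 x y hx hy
  subst hxy
  exact toWord_ne_cancel w p r x false hw

end CKfacts


/-! ### representable functions -/

open scoped Classical in
/-- `h` is a finite `ℤ`-linear combination of indicators of sets `D(μ, X)`. -/
def Rep (A : G → G → Bool) (h : CKO.OmegaT A → ℤ) : Prop :=
  ∃ (n : ℕ) (μs : Fin n → List G) (Xs : Fin n → Finset G) (c : Fin n → ℤ),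
    (∀ k : Fin n, CKO.Admissible A (μs k) ∧ CKO.LastMem (μs k) (Xs k)) ∧
    ∀ ξ : CKO.OmegaT A,
      h ξ = ∑ k : Fin n,
        c k * (if (ξ : FreeGroup G → Bool) ∈ CKO.D A (μs k) (Xs k) then 1 else 0)

variable {A : G → G → Bool}

theorem rep_congr {h₁ h₂ : CKO.OmegaT A → ℤ} (he : ∀ ξ, h₁ ξ = h₂ ξ) (hr : Rep A h₁) :
    Rep A h₂ := by
  obtain ⟨n, μs, Xs, c, hadm, hsum⟩ := hr
  exact ⟨n, μs, Xs, c, hadm, fun ξ => (he ξ) ▸ hsum ξ⟩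

theorem rep_zero : Rep A (fun _ => (0 : ℤ)) :=
  ⟨0, Fin.elim0, Fin.elim0, Fin.elim0, fun k => k.elim0, fun ξ => by simp⟩

open scoped Classical in
theorem rep_single {μ : List G} {X : Finset G} (hadm : CKO.Admissible A μ)
    (hX : CKO.LastMem μ X) (a : ℤ) :
    Rep A (fun ξ => a * (if (ξ : FreeGroup G → Bool) ∈ CKO.D A μ X then 1 else 0)) :=
  ⟨1, fun _ => μ, fun _ => X, fun _ => a, fun _ => ⟨hadm, hX⟩, fun ξ => by
    rw [Fin.sum_univ_one]⟩

theorem rep_add {h₁ h₂ : CKO.OmegaT A → ℤ} (hr₁ : Rep A h₁) (hr₂ : Rep A h₂) :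
    Rep A (fun ξ => h₁ ξ + h₂ ξ) := by
  classical
  obtain ⟨n, μs, Xs, c, hadm, hsum⟩ := hr₁
  obtain ⟨m, νs, Ys, d, hadm', hsum'⟩ := hr₂
  refine ⟨n + m, Fin.addCases μs νs, Fin.addCases Xs Ys, Fin.addCases c d, ?_, ?_⟩
  · intro k
    refine Fin.addCases ?_ ?_ k
    · intro i; simpa using hadm i
    · intro i; simpa using hadm' i
  · intro ξ
    show h₁ ξ + h₂ ξ = _
    rw [hsum ξ, hsum' ξ, Fin.sum_univ_add]
    congr 1
    · exact Finset.sum_congr rfl fun i _ => by simp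
    · exact Finset.sum_congr rfl fun i _ => by simp

theorem rep_smul {h : CKO.OmegaT A → ℤ} (a : ℤ) (hr : Rep A h) :
    Rep A (fun ξ => a * h ξ) := by
  obtain ⟨n, μs, Xs, c, hadm, hsum⟩ := hr
  refine ⟨n, μs, Xs, fun k => a * c k, hadm, fun ξ => ?_⟩
  show a * h ξ = _
  rw [hsum ξ, Finset.mul_sum]
  exact Finset.sum_congr rfl fun k _ => by ring

theorem rep_sum {ι : Type*} (s : Finset ι) (h : ι → CKO.OmegaT A → ℤ)
    (hr : ∀ i ∈ s, Rep A (h i)) : Rep A (fun ξ => ∑ i ∈ s, h i ξ) := by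
  classical
  induction s using Finset.induction_on with
  | empty => exact rep_congr (fun ξ => by simp) rep_zero
  | insert a s' hni ih =>
    refine rep_congr (fun ξ => ?_) (rep_add (hr a (by simp)) (ih fun i hi => hr i (by simp [hi])))
    rw [Finset.sum_insert hni]


/-! ### products of D-indicators -/

open scoped Classical in
theorem rep_mul_prefix {μ ν : List G} {X Y : Finset G} (hadmν : CKO.Admissible A ν)
    (hYν : CKO.LastMem ν Y) (hμν : μ ≠ ν) (hpre : μ <+: ν) :
    Rep A (fun ξ => (if (ξ : FreeGroup G → Bool) ∈ CKO.D A μ X then 1 else 0) *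
      (if (ξ : FreeGroup G → Bool) ∈ CKO.D A ν Y then 1 else 0)) := by
  obtain ⟨t, ht⟩ := hpre
  cases t with
  | nil => exact absurd (by simpa using ht) hμν
  | cons y ρ =>
    have hμy : μ ++ [y] <+: ν := ⟨ρ, by rw [← ht]; simp⟩
    by_cases hAX : ∀ x ∈ X, A x y = true
    · -- D μ X ⊇ D ν Y, so the product is the indicator of D ν Y
      have key : ∀ ξ : FreeGroup G → Bool, ξ ∈ CKO.D A ν Y → ξ ∈ CKO.D A μ X := by
        rintro ξ ⟨hΩ, hw, hY'⟩
        have hCK := omegaT_isCK hΩ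
        have hμξ : ξ (CKO.wordProd μ) = true := ck_prefix hCK ⟨y :: ρ, ht⟩ hw
        have hsucc : ξ (CKO.wordProd μ * FreeGroup.of y) = true := by
          rw [← wordProd_concat]
          exact ck_prefix hCK hμy hw
        refine ⟨hΩ, hμξ, fun x hx => ?_⟩
        exact (hCK.2.2.2 _ hμξ y hsucc x).mpr (hAX x hx)
      refine rep_congr (fun ξ => ?_) (rep_single hadmν hYν 1)
      by_cases hD : (ξ : FreeGroup G → Bool) ∈ CKO.D A ν Y
      · rw [if_pos hD, if_pos (key _ hD)]
      · rw [if_neg hD]; ring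
    · -- the intersection is empty
      push_neg at hAX
      obtain ⟨x, hxX, hAxy⟩ := hAX
      refine rep_congr (fun ξ => ?_) rep_zero
      by_cases hD : (ξ : FreeGroup G → Bool) ∈ CKO.D A ν Y
      · by_cases hD' : (ξ : FreeGroup G → Bool) ∈ CKO.D A μ X
        · exfalso
          obtain ⟨hΩ, hw, hY'⟩ := hD
          obtain ⟨_, hμξ, hX'⟩ := hD'
          have hCK := omegaT_isCK hΩ
          have hsucc : ξ.1 (CKO.wordProd μ * FreeGroup.of y) = true := by
            rw [← wordProd_concat]
            exact ck_prefix hCK hμy hw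
          exact hAxy ((hCK.2.2.2 _ hμξ y hsucc x).mp (hX' x hxX))
        · rw [if_neg hD']; ring
      · rw [if_neg hD]; ring

open scoped Classical in
theorem rep_mul_single {μ ν : List G} {X Y : Finset G} (hadmμ : CKO.Admissible A μ)
    (hXμ : CKO.LastMem μ X) (hadmν : CKO.Admissible A ν) (hYν : CKO.LastMem ν Y) :
    Rep A (fun ξ => (if (ξ : FreeGroup G → Bool) ∈ CKO.D A μ X then 1 else 0) *
      (if (ξ : FreeGroup G → Bool) ∈ CKO.D A ν Y then 1 else 0)) := by
  by_cases heq : μ = ν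
  · subst heq
    refine rep_congr (fun ξ => ?_) (rep_single hadmμ (X := X ∪ Y)
      (fun l hl => Finset.mem_union_left _ (hXμ l hl)) 1)
    have hiff : ((ξ : FreeGroup G → Bool) ∈ CKO.D A μ (X ∪ Y)) ↔
        ((ξ : FreeGroup G → Bool) ∈ CKO.D A μ X ∧ (ξ : FreeGroup G → Bool) ∈ CKO.D A μ Y) := by
      constructor
      · rintro ⟨hΩ, hw, hXY⟩
        exact ⟨⟨hΩ, hw, fun x hx => hXY x (Finset.mem_union_left _ hx)⟩,
          ⟨hΩ, hw, fun x hx => hXY x (Finset.mem_union_right _ hx)⟩⟩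
      · rintro ⟨⟨hΩ, hw, hX'⟩, ⟨_, _, hY'⟩⟩
        refine ⟨hΩ, hw, fun x hx => ?_⟩
        rcases Finset.mem_union.mp hx with hx | hx
        · exact hX' x hx
        · exact hY' x hx
    by_cases hD : (ξ : FreeGroup G → Bool) ∈ CKO.D A μ (X ∪ Y)
    · obtain ⟨h1, h2⟩ := hiff.mp hD
      rw [if_pos h1, if_pos h2, if_pos hD]
    · rw [if_neg hD]
      have hnot := (not_iff_not.mpr hiff).mp hD
      rcases Classical.em ((ξ : FreeGroup G → Bool) ∈ CKO.D A μ X) with h1 | h1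
      · rcases Classical.em ((ξ : FreeGroup G → Bool) ∈ CKO.D A μ Y) with h2 | h2
        · exact absurd ⟨h1, h2⟩ hnot
        · rw [if_pos h1, if_neg h2]
      · rw [if_neg h1]; ring
  · by_cases hpre : μ <+: ν
    · exact rep_mul_prefix hadmν hYν heq hpre
    · by_cases hpre' : ν <+: μ
      · refine rep_congr (fun ξ => ?_) (rep_mul_prefix (X := Y) (Y := X) hadmμ hXμ
          (fun hh => heq hh.symm) hpre')
        ring
      · -- disjoint: no ξ contains both words
        refine rep_congr (fun ξ => ?_) rep_zero
        by_cases hD : (ξ : FreeGroup G → Bool) ∈ CKO.D A μ X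
        · by_cases hD' : (ξ : FreeGroup G → Bool) ∈ CKO.D A ν Y
          · exfalso
            obtain ⟨hΩ, hw, -⟩ := hD
            obtain ⟨-, hw', -⟩ := hD'
            have hCK := omegaT_isCK hΩ
            rcases ck_chain hCK μ [] ν (by simpa using hw) (by simpa using hw') with
              hc | hc
            · exact hpre hc
            · exact hpre' hc
          · rw [if_neg hD']; ring
        · rw [if_neg hD]; ring

theorem rep_mul {h₁ h₂ : CKO.OmegaT A → ℤ} (hr₁ : Rep A h₁) (hr₂ : Rep A h₂) :
    Rep A (fun ξ => h₁ ξ * h₂ ξ) := by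
  classical
  obtain ⟨n, μs, Xs, c, hadm, hsum⟩ := hr₁
  obtain ⟨m, νs, Ys, d, hadm', hsum'⟩ := hr₂
  refine rep_congr (h₁ := fun ξ => ∑ k : Fin n, ∑ l : Fin m, (c k * d l) *
    ((if (ξ : FreeGroup G → Bool) ∈ CKO.D A (μs k) (Xs k) then 1 else 0) *
     (if (ξ : FreeGroup G → Bool) ∈ CKO.D A (νs l) (Ys l) then 1 else 0)))
    (fun ξ => ?_) ?_
  · rw [hsum ξ, hsum' ξ, Finset.sum_mul_sum]
    refine Finset.sum_congr rfl fun k _ => Finset.sum_congr rfl fun l _ => by ring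
  · refine rep_sum Finset.univ _ fun k _ => rep_sum Finset.univ _ fun l _ => ?_
    exact rep_smul _ (rep_mul_single (hadm k).1 (hadm k).2 (hadm' l).1 (hadm' l).2)


/-! ### indicators of single coordinates are representable -/

theorem adj_pair : ∀ (M : List (G × Bool)), (∃ v : G, M.getLast? = Option.some (v, true)) →
    (∃ q ∈ M, q.2 = false) → ∃ p u v r, M = p ++ (u, false) :: (v, true) :: r := by
  intro M
  induction M with
  | nil => rintro - ⟨q, hq, -⟩; simp at hq
  | cons a M ih =>
    rintro ⟨v0, hlast⟩ ⟨q, hq, hq2⟩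
    rcases a with ⟨a1, a2⟩
    cases a2
    · -- leading letter is negative
      cases M with
      | nil => simp at hlast
      | cons b M' =>
        rcases b with ⟨b1, b2⟩
        cases b2
        · have hlast' : ∃ v, ((b1, false) :: M').getLast? = Option.some (v, true) :=
            ⟨v0, by rwa [List.getLast?_cons_cons] at hlast⟩
          obtain ⟨p, u, v, r, hpr⟩ := ih hlast' ⟨(b1, false), by simp, rfl⟩
          exact ⟨(a1, false) :: p, u, v, r, by rw [List.cons_append, ← hpr]⟩
        · exact ⟨[], a1, b1, M', rfl⟩
    · -- leading letter is positive
      have hqM : q ∈ M := by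
        rcases List.mem_cons.mp hq with h | h
        · exfalso; rw [h] at hq2; simp at hq2
        · exact h
      cases M with
      | nil => simp at hqM
      | cons b M' =>
        obtain ⟨p, u, v, r, hpr⟩ := ih ⟨v0, by rwa [List.getLast?_cons_cons] at hlast⟩
          ⟨q, hqM, hq2⟩
        exact ⟨(a1, true) :: p, u, v, r, by rw [List.cons_append, ← hpr]⟩

theorem all_true_eq (L : List (G × Bool)) (hall : ∀ q ∈ L, q.2 = true) :
    L = (L.map Prod.fst).map (fun a => (a, true)) := by
  induction L with
  | nil => simp
  | cons q L ih =>
    have hq : q = (q.1, true) := Prod.ext rfl (hall q (List.mem_cons_self))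
    simp only [List.map_cons]
    rw [← ih (fun p hp => hall p (List.mem_cons_of_mem q hp)), ← hq]

variable {A : G → G → Bool}

open scoped Classical in
theorem chi_one_rep : Rep A (fun ξ => if (ξ : FreeGroup G → Bool) 1 = true then 1 else 0) := by
  refine rep_congr (fun ξ => ?_) (rep_single (μ := []) (X := ∅)
    List.isChain_nil (fun l hl => by simp at hl) 1)
  have hCK := omegaT_isCK ξ.2
  have hmem : (ξ : FreeGroup G → Bool) ∈ CKO.D A [] ∅ := ⟨ξ.2, hCK.1, by simp⟩
  rw [if_pos hmem, if_pos hCK.1]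
  ring

open scoped Classical in
theorem chi_negone_rep (z : G) :
    Rep A (fun ξ => if (ξ : FreeGroup G → Bool) (FreeGroup.of z)⁻¹ = true then 1 else 0) := by
  refine rep_congr (fun ξ => ?_) (rep_single (μ := []) (X := {z})
    List.isChain_nil (fun l hl => by simp at hl) 1)
  have hCK := omegaT_isCK ξ.2
  have hone : CKO.wordProd ([] : List G) * (FreeGroup.of z)⁻¹ = (FreeGroup.of z)⁻¹ := by
    rw [wordProd_nil, one_mul]
  by_cases hw : (ξ : FreeGroup G → Bool) (FreeGroup.of z)⁻¹ = true
  · have hmem : (ξ : FreeGroup G → Bool) ∈ CKO.D A [] {z} :=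
      ⟨ξ.2, hCK.1, fun x hx => by rw [Finset.mem_singleton] at hx; rw [hx, hone]; exact hw⟩
    rw [if_pos hmem, if_pos hw]; ring
  · have hmem : (ξ : FreeGroup G → Bool) ∉ CKO.D A [] {z} := by
      rintro ⟨-, -, hc⟩
      exact hw (by rw [← hone]; exact hc z (Finset.mem_singleton_self z))
    rw [if_neg hmem, if_neg hw]; ring

open scoped Classical in
theorem chi_pos_rep (μ : List G) (a : G) :
    Rep A (fun ξ => if (ξ : FreeGroup G → Bool) (CKO.wordProd (μ ++ [a])) = true
      then 1 else 0) := by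
  by_cases hadm : CKO.Admissible A (μ ++ [a])
  · refine rep_congr (fun ξ => ?_) (rep_single (X := {a}) hadm
      (fun l hl => by rw [List.getLast?_concat] at hl; simp at hl; simp [hl]) 1)
    have hCK := omegaT_isCK ξ.2
    by_cases hw : (ξ : FreeGroup G → Bool) (CKO.wordProd (μ ++ [a])) = true
    · have hmem : (ξ : FreeGroup G → Bool) ∈ CKO.D A (μ ++ [a]) {a} := by
        refine ⟨ξ.2, hw, fun x hx => ?_⟩
        rw [Finset.mem_singleton] at hx
        subst hx
        rw [wordProd_concat, mul_inv_cancel_right]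
        exact ck_prefix hCK (List.prefix_append μ _) hw
      rw [if_pos hmem, if_pos hw]; ring
    · have hmem : (ξ : FreeGroup G → Bool) ∉ CKO.D A (μ ++ [a]) {a} := fun hc => hw hc.2.1
      rw [if_neg hmem, if_neg hw]; ring
  · refine rep_congr (fun ξ => ?_) rep_zero
    rw [if_neg]
    intro hw
    exact hadm (ck_admissible (omegaT_isCK ξ.2) hw)

open scoped Classical in
theorem chi_posneg_rep (μ : List G) (x z : G) (hxz : x ≠ z) :
    Rep A (fun ξ => if (ξ : FreeGroup G → Bool)
      (CKO.wordProd (μ ++ [x]) * (FreeGroup.of z)⁻¹) = true then 1 else 0) := by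
  have hpre : ∀ (ξ : FreeGroup G → Bool), CKO.IsCK A ξ →
      ξ (CKO.wordProd (μ ++ [x]) * (FreeGroup.of z)⁻¹) = true →
      ξ (CKO.wordProd (μ ++ [x])) = true := by
    intro ξ hCK hw
    have := ck_prefix_gen hCK hw (p := (μ ++ [x]).map fun a => (a, true))
      (by rw [toWord_posneg μ x z hxz]; exact ⟨[(z, false)], rfl⟩)
    rwa [← wordProd_eq_mk] at this
  by_cases hadm : CKO.Admissible A (μ ++ [x])
  · refine rep_congr (fun ξ => ?_) (rep_single (X := insert z {x}) hadm
      (fun l hl => by rw [List.getLast?_concat] at hl; simp at hl; simp [hl]) 1)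
    have hCK := omegaT_isCK ξ.2
    by_cases hw : (ξ : FreeGroup G → Bool) (CKO.wordProd (μ ++ [x]) * (FreeGroup.of z)⁻¹) = true
    · have hmem : (ξ : FreeGroup G → Bool) ∈ CKO.D A (μ ++ [x]) (insert z {x}) := by
        refine ⟨ξ.2, hpre _ hCK hw, fun u hu => ?_⟩
        rcases Finset.mem_insert.mp hu with hu | hu
        · subst hu; exact hw
        · rw [Finset.mem_singleton] at hu
          subst hu
          rw [wordProd_concat, mul_inv_cancel_right]
          exact ck_prefix hCK (List.prefix_append μ _) (hpre _ hCK hw)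
      rw [if_pos hmem, if_pos hw]; ring
    · have hmem : (ξ : FreeGroup G → Bool) ∉ CKO.D A (μ ++ [x]) (insert z {x}) := by
        rintro ⟨-, -, hc⟩
        exact hw (hc z (Finset.mem_insert_self z {x}))
      rw [if_neg hmem, if_neg hw]; ring
  · refine rep_congr (fun ξ => ?_) rep_zero
    rw [if_neg]
    intro hw
    exact hadm (ck_admissible (omegaT_isCK ξ.2) (hpre _ (omegaT_isCK ξ.2) hw))

open scoped Classical in
theorem rep_coord (w : FreeGroup G) :
    Rep A (fun ξ => if (ξ : FreeGroup G → Bool) w = true then 1 else 0) := by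
  suffices H : ∀ (n : ℕ) (w : FreeGroup G), w.toWord.length ≤ n →
      Rep A (fun ξ => if (ξ : FreeGroup G → Bool) w = true then 1 else 0) from
    H w.toWord.length w le_rfl
  intro n
  induction n with
  | zero =>
    intro w hw
    have hnil : w.toWord = [] := List.length_eq_zero_iff.mp (Nat.le_zero.mp hw)
    have : w = 1 := FreeGroup.toWord_eq_nil_iff.mp hnil
    subst this
    exact chi_one_rep
  | succ n ihn =>
    intro w hw
    rcases List.eq_nil_or_concat w.toWord with hL | ⟨L', ⟨z, b⟩, hL⟩
    · have : w = 1 := FreeGroup.toWord_eq_nil_iff.mp hL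
      subst this
      exact chi_one_rep
    · rw [List.concat_eq_append] at hL
      have hwmk : w = FreeGroup.mk (L' ++ [(z, b)]) := by rw [← hL, FreeGroup.mk_toWord]
      cases b
      · -- last letter negative
        rcases List.eq_nil_or_concat L' with hL' | ⟨P, ⟨x, xb⟩, hL'⟩
        · -- w = (of z)⁻¹
          subst hL'
          have : w = (FreeGroup.of z)⁻¹ := by
            rw [hwmk, List.nil_append, ← inv_of_eq]
          subst this
          exact chi_negone_rep z
        · rw [List.concat_eq_append] at hL'
          subst hL'
          cases xb
          · -- recursive case: two trailing negative letters
            set ρ := w * FreeGroup.of z with hρdef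
            have hρmk : ρ = FreeGroup.mk (P ++ [(x, false)]) := by
              rw [hρdef, hwmk, mk_concat_neg, inv_mul_cancel_right]
            have hchainL : List.Chain' rcond ((P ++ [(x, false)]) ++ [(z, false)]) := by
              rw [← hL]; exact toWord_chain w
            have hchainL' : List.Chain' rcond (P ++ [(x, false)]) :=
              (List.isChain_append.mp hchainL).1
            have hρtoWord : ρ.toWord = P ++ [(x, false)] := by
              rw [hρmk]; exact toWord_mk_of_chain hchainL'
            have hlen : ρ.toWord.length ≤ n := by
              have := congrArg List.length hL
              simp at this
              rw [hρtoWord]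
              simp
              omega
            have hrep := ihn ρ hlen
            have hwρ : w = ρ * (FreeGroup.of z)⁻¹ := by
              rw [hρdef, mul_inv_cancel_right]
            have key : ∀ ξ : CKO.OmegaT A,
                ((ξ : FreeGroup G → Bool) w = true) ↔
                ((ξ : FreeGroup G → Bool) ρ = true ∧ A z x = true) := by
              intro ξ
              have hCK := omegaT_isCK ξ.2
              have hmkP : ρ * FreeGroup.of x = FreeGroup.mk P := by
                rw [hρmk, mk_concat_neg, inv_mul_cancel_right]
              constructor
              · intro hwt
                have hρt : (ξ : FreeGroup G → Bool) ρ = true := by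
                  have := ck_prefix_gen hCK hwt (p := P ++ [(x, false)])
                    (by rw [hL]; exact ⟨[(z, false)], rfl⟩)
                  rwa [← hρmk] at this
                have hPt : (ξ : FreeGroup G → Bool) (ρ * FreeGroup.of x) = true := by
                  rw [hmkP]
                  exact ck_prefix_gen hCK hwt (p := P)
                    (by rw [hL]; exact ⟨[(x, false), (z, false)], by simp⟩)
                have hiff := hCK.2.2.2 ρ hρt x hPt z
                refine ⟨hρt, hiff.mp ?_⟩
                rwa [← hwρ]
              · rintro ⟨hρt, hA⟩
                have hPt : (ξ : FreeGroup G → Bool) (ρ * FreeGroup.of x) = true := by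
                  rw [hmkP]
                  exact ck_prefix_gen hCK hρt (p := P)
                    (by rw [hρtoWord]; exact ⟨[(x, false)], rfl⟩)
                have hiff := hCK.2.2.2 ρ hρt x hPt z
                rw [hwρ]
                exact hiff.mpr hA
            refine rep_congr (fun ξ => ?_) (rep_smul (if A z x = true then 1 else 0) hrep)
            show (if A z x = true then (1 : ℤ) else 0) *
                (if (ξ : FreeGroup G → Bool) ρ = true then 1 else 0) = _
            by_cases hA : A z x = true
            · by_cases hρt : (ξ : FreeGroup G → Bool) ρ = true
              · rw [if_pos hA, if_pos hρt, if_pos ((key ξ).mpr ⟨hρt, hA⟩)]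
                norm_num
              · rw [if_pos hA, if_neg hρt, if_neg (fun hc => hρt ((key ξ).mp hc).1)]
                ring
            · rw [if_neg hA, if_neg (fun hc => hA ((key ξ).mp hc).2)]
              ring
          · -- trailing (x, true), (z, false)
            by_cases hall : ∀ q ∈ P, q.2 = true
            · have hxz : x ≠ z := by
                intro hcon
                subst hcon
                exact toWord_ne_cancel w P [] x true (by rw [hL]; simp)
              set μ := P.map Prod.fst with hμdef
              have hPeq : P ++ [(x, true)] = (μ ++ [x]).map (fun a => (a, true)) := by
                rw [List.map_append, ← all_true_eq P hall]
                rfl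
              have hweq : w = CKO.wordProd (μ ++ [x]) * (FreeGroup.of z)⁻¹ := by
                rw [hwmk, mk_concat_neg, hPeq, ← wordProd_eq_mk]
              rw [hweq]
              exact chi_posneg_rep μ x z hxz
            · push_neg at hall
              obtain ⟨q, hqP, hq2⟩ := hall
              obtain ⟨p, u, v, r, hpr⟩ := adj_pair (P ++ [(x, true)])
                ⟨x, List.getLast?_concat⟩
                ⟨q, List.mem_append_left _ hqP, by simpa using hq2⟩
              refine rep_congr (fun ξ => ?_) rep_zero
              rw [if_neg]
              intro hwt
              refine ck_bad (omegaT_isCK ξ.2) (p := p) (r := r ++ [(z, false)])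
                (x := u) (y := v) ?_ hwt
              rw [hL, hpr]
              simp
      · -- last letter positive
        by_cases hall : ∀ q ∈ L', q.2 = true
        · set μ := L'.map Prod.fst with hμdef
          have hPeq : L' ++ [(z, true)] = (μ ++ [z]).map (fun a => (a, true)) := by
            rw [List.map_append, ← all_true_eq L' hall]
            rfl
          have hweq : w = CKO.wordProd (μ ++ [z]) := by
            rw [hwmk, hPeq, ← wordProd_eq_mk]
          rw [hweq]
          exact chi_pos_rep μ z
        · push_neg at hall
          obtain ⟨q, hqP, hq2⟩ := hall
          obtain ⟨p, u, v, r, hpr⟩ := adj_pair (L' ++ [(z, true)])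
            ⟨z, List.getLast?_concat⟩
            ⟨q, List.mem_append_left _ hqP, by simpa using hq2⟩
          refine rep_congr (fun ξ => ?_) rep_zero
          rw [if_neg]
          intro hwt
          exact ck_bad (omegaT_isCK ξ.2) (p := p) (r := r) (x := u) (y := v)
            (by rw [hL, hpr]) hwt


/-! ### clopen sets and the main argument -/

theorem rep_one : Rep A (fun _ => (1 : ℤ)) :=
  rep_congr (fun ξ => by rw [if_pos (omegaT_isCK ξ.2).1]) chi_one_rep

open scoped Classical in
theorem rep_coord_eq (w : FreeGroup G) (b : Bool) :
    Rep A (fun ξ => if (ξ : FreeGroup G → Bool) w = b then 1 else 0) := by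
  cases b
  · refine rep_congr (fun ξ => ?_) (rep_add rep_one (rep_smul (-1) (rep_coord w)))
    cases hb : (ξ : FreeGroup G → Bool) w <;> simp [hb]
  · exact rep_coord w

open scoped Classical in
theorem rep_cylinder (I : Finset (FreeGroup G)) (η : FreeGroup G → Bool) :
    Rep A (fun ξ => if (∀ g ∈ I, (ξ : FreeGroup G → Bool) g = η g) then 1 else 0) := by
  classical
  induction I using Finset.induction_on with
  | empty => exact rep_congr (fun ξ => by rw [if_pos (by simp)]) rep_one
  | insert w I hni ih =>
    refine rep_congr (fun ξ => ?_) (rep_mul (rep_coord_eq w (η w)) ih)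
    have hiff : (∀ g ∈ insert w I, (ξ : FreeGroup G → Bool) g = η g) ↔
        ((ξ : FreeGroup G → Bool) w = η w ∧ ∀ g ∈ I, (ξ : FreeGroup G → Bool) g = η g) :=
      Finset.forall_mem_insert _ _ _
    by_cases h1 : (ξ : FreeGroup G → Bool) w = η w
    · by_cases h2 : ∀ g ∈ I, (ξ : FreeGroup G → Bool) g = η g
      · rw [if_pos h1, if_pos h2, if_pos (hiff.mpr ⟨h1, h2⟩)]
        norm_num
      · rw [if_pos h1, if_neg h2, if_neg (fun hc => h2 (hiff.mp hc).2)]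
        ring
    · rw [if_neg h1, if_neg (fun hc => h1 (hiff.mp hc).1)]
      ring

open scoped Classical in
theorem rep_union {S T : Set (FreeGroup G → Bool)}
    (hS : Rep A (fun ξ => if (ξ : FreeGroup G → Bool) ∈ S then 1 else 0))
    (hT : Rep A (fun ξ => if (ξ : FreeGroup G → Bool) ∈ T then 1 else 0)) :
    Rep A (fun ξ => if (ξ : FreeGroup G → Bool) ∈ S ∪ T then 1 else 0) := by
  refine rep_congr (fun ξ => ?_)
    (rep_add (rep_add hS hT) (rep_smul (-1) (rep_mul hS hT)))
  by_cases h1 : (ξ : FreeGroup G → Bool) ∈ S <;>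
    by_cases h2 : (ξ : FreeGroup G → Bool) ∈ T <;>
      simp [Set.mem_union, h1, h2]

open scoped Classical in
theorem rep_biUnion {ι : Type*} (F : Finset ι) (C : ι → Set (FreeGroup G → Bool))
    (h : ∀ i ∈ F, Rep A (fun ξ => if (ξ : FreeGroup G → Bool) ∈ C i then 1 else 0)) :
    Rep A (fun ξ => if (ξ : FreeGroup G → Bool) ∈ ⋃ i ∈ F, C i then 1 else 0) := by
  classical
  induction F using Finset.induction_on with
  | empty => exact rep_congr (fun ξ => by rw [if_neg (by simp)]) rep_zero
  | insert a F hni ih =>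
    have := rep_union (h a (by simp)) (ih fun i hi => h i (by simp [hi]))
    refine rep_congr (fun ξ => ?_) this
    congr 1
    rw [Finset.set_biUnion_insert]

open scoped Classical in
theorem rep_clopen (U : Set ↥(CKO.OmegaT A)) (hU : IsClopen U) :
    Rep A (fun ξ => if ξ ∈ U then 1 else 0) := by
  classical
  have hcl : IsClosed (CKO.OmegaT A) := isClosed_closure
  haveI : CompactSpace ↥(CKO.OmegaT A) := isCompact_iff_compactSpace.mp hcl.isCompact
  obtain ⟨W, hW, hWU⟩ := isOpen_induced_iff.mp hU.isOpen
  have hcompU : IsCompact (Subtype.val '' U) :=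
    (hU.isClosed.isCompact).image continuous_subtype_val
  have hKW : Subtype.val '' U ⊆ W := by
    rintro - ⟨ξ, hξU, rfl⟩
    rw [← hWU] at hξU
    exact hξU
  have hcover : ∀ η ∈ Subtype.val '' U, ∃ C : Set (FreeGroup G → Bool),
      IsOpen C ∧ η ∈ C ∧ C ⊆ W ∧
      Rep A (fun ξ => if (ξ : FreeGroup G → Bool) ∈ C then 1 else 0) := by
    intro η hη
    obtain ⟨I, u, hIu, hpi⟩ := (isOpen_pi_iff.mp hW) η (hKW hη)
    refine ⟨{θ | ∀ g ∈ I, θ g = η g}, ?_, fun g hg => rfl, ?_, ?_⟩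
    · have : {θ : FreeGroup G → Bool | ∀ g ∈ I, θ g = η g}
          = Set.pi ↑I (fun g => {η g}) := by
        ext θ
        simp [Set.mem_pi]
      rw [this]
      exact isOpen_set_pi I.finite_toSet fun a _ => isOpen_discrete _
    · intro θ hθ
      apply hpi
      intro g hg
      rw [hθ g hg]
      exact (hIu g hg).2
    · refine rep_congr (fun ξ => ?_) (rep_cylinder I η)
      have h : (∀ g ∈ I, (ξ : FreeGroup G → Bool) g = η g) ↔
          ((ξ : FreeGroup G → Bool) ∈ {θ | ∀ g ∈ I, θ g = η g}) := Iff.rfl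
      by_cases hm : ∀ g ∈ I, (ξ : FreeGroup G → Bool) g = η g
      · rw [if_pos hm, if_pos (h.mp hm)]
      · rw [if_neg hm, if_neg (fun hc => hm (h.mpr hc))]
  choose! C hCopen hCmem hCW hCrep using hcover
  have hsub : Subtype.val '' U ⊆ ⋃ η ∈ Subtype.val '' U, C η := fun η hη =>
    Set.mem_biUnion hη (hCmem η hη)
  obtain ⟨F, hFK, hFfin, hcov⟩ :=
    hcompU.elim_finite_subcover_image (fun η hη => hCopen η hη) hsub
  have hrep := rep_biUnion hFfin.toFinset C
    (fun η hη => hCrep η (hFK (hFfin.mem_toFinset.mp hη)))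
  refine rep_congr (fun ξ => ?_) hrep
  have hiff : ((ξ : FreeGroup G → Bool) ∈ ⋃ η ∈ hFfin.toFinset, C η) ↔ ξ ∈ U := by
    constructor
    · intro hmem
      rw [Set.mem_iUnion₂] at hmem
      obtain ⟨η, hη, hmem⟩ := hmem
      have hη' : η ∈ F := hFfin.mem_toFinset.mp hη
      have hWmem : (ξ : FreeGroup G → Bool) ∈ W := hCW η (hFK hη') hmem
      rw [← hWU]
      exact hWmem
    · intro hξU
      have hm : (ξ : FreeGroup G → Bool) ∈ ⋃ η ∈ F, C η :=
        hcov (Set.mem_image_of_mem Subtype.val hξU)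
      rw [Set.mem_iUnion₂] at hm ⊢
      obtain ⟨η, hη, hm⟩ := hm
      exact ⟨η, hFfin.mem_toFinset.mpr hη, hm⟩
  by_cases hm : ξ ∈ U
  · rw [if_pos hm, if_pos (hiff.mpr hm)]
  · rw [if_neg hm, if_neg (fun hc => hm (hiff.mp hc))]


open scoped Classical in
theorem rep_continuous (f : C(CKO.OmegaT A, ℤ)) : Rep A ⇑f := by
  classical
  have hcl : IsClosed (CKO.OmegaT A) := isClosed_closure
  haveI : CompactSpace ↥(CKO.OmegaT A) := isCompact_iff_compactSpace.mp hcl.isCompact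
  have hfin : (Set.range ⇑f).Finite := (isCompact_range f.continuous).finite_of_discrete
  have hfiber : ∀ v : ℤ, Rep A (fun ξ => if f ξ = v then 1 else 0) := by
    intro v
    have hclopen : IsClopen (⇑f ⁻¹' {v}) := (isClopen_discrete {v}).preimage f.continuous
    refine rep_congr (fun ξ => ?_) (rep_clopen _ hclopen)
    have h : (ξ ∈ ⇑f ⁻¹' {v}) ↔ (f ξ = v) := Iff.rfl
    by_cases hm : ξ ∈ ⇑f ⁻¹' {v}
    · rw [if_pos hm, if_pos (h.mp hm)]
    · rw [if_neg hm, if_neg (fun hc => hm (h.mpr hc))]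
  refine rep_congr (fun ξ => ?_)
    (rep_sum hfin.toFinset (fun v ξ => v * (if f ξ = v then 1 else 0))
      (fun v _ => rep_smul v (hfiber v)))
  show (∑ v ∈ hfin.toFinset, v * (if f ξ = v then 1 else 0)) = f ξ
  rw [Finset.sum_eq_single_of_mem (f ξ) (hfin.mem_toFinset.mpr ⟨ξ, rfl⟩)]
  · rw [if_pos rfl]; ring
  · intro v _ hne
    rw [if_neg (fun hc => hne hc.symm)]
    ring

end CKOAux

open scoped Classical

/-- Every continuous function `f : Ω̃_A → ℤ` is a finite `ℤ`-linear
combination of characteristic functions of sets `D(μ, X)` with `μ` admissible and `X` a finite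
set containing the last letter of `μ` whenever `μ ≠ e`. -/
theorem stmt_12 {G : Type*} [Nonempty G] [DecidableEq G]
    (A : G → G → Bool) (hA : ∀ i : G, ∃ j : G, A i j = true)
    (f : C(CKO.OmegaT A, ℤ)) :
    ∃ (n : ℕ) (μs : Fin n → List G) (Xs : Fin n → Finset G) (c : Fin n → ℤ),
      (∀ k : Fin n, CKO.Admissible A (μs k) ∧ CKO.LastMem (μs k) (Xs k)) ∧
      ∀ ξ : CKO.OmegaT A,
        f ξ = ∑ k : Fin n,
          c k * (if (ξ : FreeGroup G → Bool) ∈ CKO.D A (μs k) (Xs k) then 1 else 0) := by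
  exact CKOAux.rep_continuous f
end
end

section
/- For every continuous function g : Ω̃_A → ℤ there exist f ∈ ⊕_{x∈𝒢} C(Δ_x; ℤ) and h ∈ ℜ such that g = L_α f + h as functions on Ω̃_A. (That is, every element of C(Ω̃_A; ℤ) is congruent, modulo the image of L_α, to an element of the ring ℜ generated by 1 and the characteristic functions of the Δ_i and Δ_{i⁻¹}.) -/
set_option linter.unusedSectionVars false
set_option maxHeartbeats 1000000


open OnePoint

noncomputable section

namespace CKO

variable {G : Type*} [DecidableEq G]

/-- Membership in `⊕_{x∈G} C(Δ_x; ℤ)`: finitely many nonzero components, each vanishing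
outside `Δ_x` and restricting to a continuous function on `Ω̃_A`. -/
def MemDirectSum (A : G → G → Bool) (f : G → (FreeGroup G → Bool) → ℤ) : Prop :=
  {x : G | f x ≠ 0}.Finite ∧
  (∀ (x : G) (ξ : FreeGroup G → Bool),
    (ξ ∉ OmegaT A ∨ ξ (FreeGroup.of x) ≠ true) → f x ξ = 0) ∧
  (∀ x : G, Continuous fun ξ : OmegaT A => f x (ξ : FreeGroup G → Bool))

/-- The map `L_α`: `(L_α f)(ξ) = Σ_x f_x(ξ) − Σ_{x : x⁻¹ ∈ ξ} f_x(xξ)`. -/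
def Lalpha (f : G → (FreeGroup G → Bool) → ℤ) (ξ : FreeGroup G → Bool) : ℤ :=
  (∑ᶠ x : G, f x ξ) -
    ∑ᶠ x : G, if ξ ((FreeGroup.of x)⁻¹) = true
      then f x fun ω => ξ ((FreeGroup.of x)⁻¹ * ω) else 0

/-- The ring `ℜ` of functions on `Ω̃_A` generated by `1` and the characteristic functions of
the `Δ_i` and `Δ_{i⁻¹}`. -/
def frakR (A : G → G → Bool) : Subring (OmegaT A → ℤ) :=
  Subring.closure
    ((Set.range fun i : G => fun ξ : OmegaT A =>
        if (ξ : FreeGroup G → Bool) (FreeGroup.of i) = true then (1 : ℤ) else 0) ∪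
     (Set.range fun i : G => fun ξ : OmegaT A =>
        if (ξ : FreeGroup G → Bool) ((FreeGroup.of i)⁻¹) = true then (1 : ℤ) else 0))

end CKO

namespace CKOAux

open FreeGroup List CKO

variable {G : Type*} [DecidableEq G]

/-- adjacency relation for reduced words -/
def RR : (G × Bool) → (G × Bool) → Prop := fun a b => ¬ (b.1 = a.1 ∧ b.2 = !a.2)

lemma reduce_eq_self_of_chain' : ∀ {w : List (G × Bool)}, List.Chain' RR w →
    FreeGroup.reduce w = w := by
  intro w h
  induction w with
  | nil => rfl
  | cons a w ih =>
    have hw : reduce w = w := ih h.tail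
    rw [FreeGroup.reduce.cons, hw]
    cases w with
    | nil => rfl
    | cons b w' =>
      have hR : RR a b := (List.isChain_cons_cons.mp h).1
      simp only
      rw [if_neg]
      rintro ⟨h1, h2⟩
      exact hR ⟨h1.symm, by rw [h2, Bool.not_not]⟩

lemma chain'_of_reduce_eq_self {w : List (G × Bool)} (h : reduce w = w) :
    List.Chain' RR w := by
  simp only [List.Chain', List.isChain_iff_getElem]
  intro i hi
  by_contra hR
  unfold RR at hR
  push_neg at hR
  obtain ⟨h1, h2⟩ := hR
  have hi1 : i < w.length := by omega
  have hi2 : i + 1 < w.length := by omega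
  have hw : w = w.take i ++ (w.get ⟨i, hi1⟩) :: (w.get ⟨i+1, hi2⟩) :: w.drop (i+2) := by
    conv_lhs => rw [← List.take_append_drop i w]
    congr 1
    rw [List.drop_eq_getElem_cons hi1, List.drop_eq_getElem_cons (by omega : i + 1 < w.length)]
    simp
  have hget : w.get ⟨i+1, hi2⟩ = ((w.get ⟨i, hi1⟩).1, !(w.get ⟨i, hi1⟩).2) :=
    Prod.ext h1 h2
  rw [hget] at hw
  exact FreeGroup.reduce.not (by rw [h, hw])

lemma reduce_eq_self_of_infix {w v : List (G × Bool)} (h : reduce w = w) (h' : v <:+: w) :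
    reduce v = v :=
  reduce_eq_self_of_chain' ((chain'_of_reduce_eq_self h).infix h')

lemma reduced_toWord_infix {t : FreeGroup G} {v : List (G × Bool)} (h' : v <:+: t.toWord) :
    reduce v = v :=
  reduce_eq_self_of_infix (FreeGroup.reduce_toWord t) h'

lemma toWord_mk_of_infix {t : FreeGroup G} {v : List (G × Bool)} (h' : v <:+: t.toWord) :
    (FreeGroup.mk v).toWord = v := by
  rw [FreeGroup.toWord_mk, reduced_toWord_infix h']

/-- cancel a pair in the middle -/
lemma mk_append_cancel (u v : List (G × Bool)) (x : G) (b : Bool) :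
    FreeGroup.mk (u ++ (x, b) :: (x, !b) :: v) = FreeGroup.mk (u ++ v) :=
  Quot.sound (FreeGroup.Red.Step.not)

lemma mk_concat_mul (u : List (G × Bool)) (x : G) :
    FreeGroup.mk (u ++ [(x, false)]) * FreeGroup.of x = FreeGroup.mk u := by
  rw [show FreeGroup.of x = FreeGroup.mk [(x, true)] from rfl, FreeGroup.mul_mk]
  have := mk_append_cancel (G := G) u [] x false
  simpa using this

lemma of_inv_eq_mk (x : G) : (FreeGroup.of x)⁻¹ = FreeGroup.mk [(x, false)] := by
  rw [show FreeGroup.of x = FreeGroup.mk [(x, true)] from rfl, FreeGroup.inv_mk]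
  rfl

lemma mk_concat_inv_mul (u : List (G × Bool)) (x : G) :
    FreeGroup.mk u * (FreeGroup.of x)⁻¹ = FreeGroup.mk (u ++ [(x, false)]) := by
  rw [of_inv_eq_mk, FreeGroup.mul_mk]

lemma of_inv_mul_mk_cons (y : G) (p : List (G × Bool)) :
    (FreeGroup.of y)⁻¹ * FreeGroup.mk ((y, true) :: p) = FreeGroup.mk p := by
  rw [of_inv_eq_mk, FreeGroup.mul_mk]
  have := mk_append_cancel (G := G) [] p y false
  simpa using this

lemma of_inv_mul_mk (y : G) (p : List (G × Bool)) :
    (FreeGroup.of y)⁻¹ * FreeGroup.mk p = FreeGroup.mk ((y, false) :: p) := by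
  rw [of_inv_eq_mk, FreeGroup.mul_mk]
  rfl

/-! ### pointwise lemmas at the `IsCK` level -/

variable {A : G → G → Bool} {ξ : FreeGroup G → Bool}

lemma ck_prefix_s14 (hξ : IsCK A ξ) {t : FreeGroup G} {p : List (G × Bool)}
    (hp : p <+: t.toWord) (ht : ξ t = true) : ξ (FreeGroup.mk p) = true :=
  hξ.2.1 t ht p hp

lemma ck_head (hξ : IsCK A ξ) {t : FreeGroup G} {y : G} {q : List (G × Bool)}
    (hw : t.toWord = (y, true) :: q) (ht : ξ t = true) : ξ (FreeGroup.of y) = true := by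
  have : [(y, true)] <+: t.toWord := by rw [hw]; exact ⟨q, rfl⟩
  have h := ck_prefix_s14 hξ this ht
  rwa [show FreeGroup.mk [(y, true)] = FreeGroup.of y from rfl] at h

lemma ck_b1 (hξ : IsCK A ξ) {y z : G} (hy : ξ (FreeGroup.of y) = true)
    (hz : ξ (FreeGroup.of z) = true) : y = z :=
  hξ.2.2.1 1 hξ.1 y z (by rwa [one_mul]) (by rwa [one_mul])

lemma ck_c1 (hξ : IsCK A ξ) {y x : G} (hy : ξ (FreeGroup.of y) = true) :
    ξ ((FreeGroup.of x)⁻¹) = A x y := by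
  have h := hξ.2.2.2 1 hξ.1 y (by rwa [one_mul]) x
  rw [one_mul] at h
  cases hA : A x y
  · rw [hA] at h
    simp only [Bool.false_eq_true, iff_false, Bool.not_eq_true] at h
    exact h
  · rw [hA] at h
    simpa using h.mpr rfl

/-- normality: after a `false` letter, everything is `false` -/
def Nml (w : List (G × Bool)) : Prop :=
  List.Chain' (fun a b => a.2 = false → b.2 = false) w

lemma ck_nonnormal (hξ : IsCK A ξ) {t : FreeGroup G} (h : ¬ Nml t.toWord) :
    ξ t = false := by
  by_contra ht
  rw [Bool.not_eq_false] at ht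
  unfold Nml at h
  simp only [List.Chain', List.isChain_iff_getElem] at h
  push_neg at h
  obtain ⟨i, hi, hfalse, htrue⟩ := h
  set w := t.toWord with hwdef
  have hi1 : i < w.length := by omega
  have hi2 : i + 1 < w.length := by omega
  replace htrue : (w.get ⟨i+1, by omega⟩).2 = true := Bool.ne_false_iff.mp htrue
  set x := (w.get ⟨i, hi1⟩).1 with hx
  set z := (w.get ⟨i+1, hi2⟩).1 with hz
  have hwi : w.get ⟨i, hi1⟩ = (x, false) := Prod.ext rfl hfalse
  have hwi1 : w.get ⟨i+1, hi2⟩ = (z, true) := Prod.ext rfl htrue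
  -- p1 = take (i+1), ω = mk p1
  have hp1 : w.take i ++ [(x, false)] = w.take (i+1) := by
    rw [← hwi]; simpa using List.take_concat_get' w i hi1
  have hp2 : w.take (i+1) ++ [(z, true)] = w.take (i+2) := by
    rw [← hwi1]; simpa using List.take_concat_get' w (i+1) hi2
  have hω : ξ (FreeGroup.mk (w.take (i+1))) = true :=
    ck_prefix_s14 hξ (List.take_prefix _ _) ht
  have h1 : ξ (FreeGroup.mk (w.take (i+1)) * FreeGroup.of x) = true := by
    rw [← hp1, mk_concat_mul]
    exact ck_prefix_s14 hξ (List.take_prefix _ _) ht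
  have h2 : ξ (FreeGroup.mk (w.take (i+1)) * FreeGroup.of z) = true := by
    have : FreeGroup.mk (w.take (i+1)) * FreeGroup.of z = FreeGroup.mk (w.take (i+2)) := by
      rw [← hp2, show FreeGroup.of z = FreeGroup.mk [(z, true)] from rfl, FreeGroup.mul_mk]
    rw [this]
    exact ck_prefix_s14 hξ (List.take_prefix _ _) ht
  have hxz : x = z := hξ.2.2.1 _ hω x z h1 h2
  -- contradiction with reducedness
  have hwdecomp : w = w.take i ++ (x, false) :: (x, !false) :: w.drop (i+2) := by
    conv_lhs => rw [← List.take_append_drop i w]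
    congr 1
    rw [List.drop_eq_getElem_cons hi1, List.drop_eq_getElem_cons (by omega : i + 1 < w.length)]
    simp only [Bool.not_false]
    rw [show w[i] = (x, false) from hwi, show w[i+1] = (z, true) from hwi1, hxz]
  have hred : FreeGroup.reduce w = w := FreeGroup.reduce_toWord t
  exact FreeGroup.reduce.not (hred.trans hwdecomp)

lemma ck_drop_last (hξ : IsCK A ξ) {t : FreeGroup G} {v : List (G × Bool)} {x z : G}
    (hw : t.toWord = v ++ [(x, false), (z, false)]) :
    ξ t = (A z x && ξ (FreeGroup.mk (v ++ [(x, false)]))) := by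
  have hw' : t.toWord = (v ++ [(x, false)]) ++ [(z, false)] := by
    rw [hw]; simp
  have hinf : v ++ [(x, false)] <+: t.toWord := by rw [hw']; exact ⟨_, rfl⟩
  set ω := FreeGroup.mk (v ++ [(x, false)]) with hωdef
  have ht : t = ω * (FreeGroup.of z)⁻¹ := by
    rw [hωdef, mk_concat_inv_mul, ← hw', FreeGroup.mk_toWord]
  cases hω : ξ ω
  · -- ξ ω = false: then ξ t = false
    cases ht' : ξ t
    · simp
    · exact absurd (ck_prefix_s14 hξ hinf ht') (by rw [hω]; simp)
  · -- ξ ω = true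
    have hωword : ω.toWord = v ++ [(x, false)] := toWord_mk_of_infix hinf.isInfix
    have hv : ξ (FreeGroup.mk v) = true :=
      ck_prefix_s14 hξ (by rw [hωword]; exact ⟨_, rfl⟩) hω
    have hsucc : ξ (ω * FreeGroup.of x) = true := by
      rw [hωdef, mk_concat_mul]; exact hv
    have hc := hξ.2.2.2 ω hω x hsucc z
    rw [← ht] at hc
    rw [Bool.and_true]
    cases hA : A z x
    · rw [hA] at hc; simp only [Bool.false_eq_true, iff_false, Bool.not_eq_true] at hc; exact hc
    · rw [hA] at hc; simpa using hc.mpr rfl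


/-! ### the shift lemma -/

lemma ck_shift (hξ : IsCK A ξ) (hub : Unbounded ξ) {y : G}
    (hy : ξ ((FreeGroup.of y)⁻¹) = true) :
    IsCK A (fun ω => ξ ((FreeGroup.of y)⁻¹ * ω)) ∧
      Unbounded (fun ω => ξ ((FreeGroup.of y)⁻¹ * ω)) := by
  constructor
  · refine ⟨by simpa using hy, ?_, ?_, ?_⟩
    · -- prefix condition
      intro ω hω p hp
      simp only at hω ⊢
      by_cases hcase : ∃ q', ω.toWord = (y, true) :: q'
      · obtain ⟨q', hq⟩ := hcase
        have hωm : (FreeGroup.of y)⁻¹ * ω = FreeGroup.mk q' := by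
          conv_lhs => rw [← FreeGroup.mk_toWord (x := ω), hq]
          exact of_inv_mul_mk_cons y q'
        have hq' : (FreeGroup.mk q').toWord = q' :=
          toWord_mk_of_infix (t := ω) (by rw [hq]; exact (List.suffix_cons _ _).isInfix)
        rw [hq] at hp
        cases p with
        | nil =>
          rw [show FreeGroup.mk ([] : List (G × Bool)) = 1 from rfl, mul_one]
          exact hy
        | cons a p' =>
          obtain ⟨ha, hp'⟩ := List.cons_prefix_cons.mp hp
          subst ha
          rw [show FreeGroup.mk ((y, true) :: p') = FreeGroup.of y * FreeGroup.mk p' from by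
            rw [show FreeGroup.of y = FreeGroup.mk [(y, true)] from rfl, FreeGroup.mul_mk]; rfl,
            ← mul_assoc, inv_mul_cancel, one_mul]
          exact hξ.2.1 (FreeGroup.mk q') (by rw [← hωm]; exact hω) p' (by rw [hq']; exact hp')

      · have hred : reduce ((y, false) :: ω.toWord) = (y, false) :: ω.toWord := by
          apply reduce_eq_self_of_chain'
          simp only [List.Chain', List.isChain_cons]
          constructor
          · intro a ha
            rintro ⟨h1, h2⟩
            apply hcase
            cases htw : ω.toWord with
            | nil => rw [htw] at ha; simp at ha
            | cons b q' =>
              rw [htw] at ha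
              simp only [List.head?_cons, Option.mem_def, Option.some.injEq] at ha
              subst ha
              exact ⟨q', by congr 1; exact Prod.ext h1 (by simpa using h2)⟩
          · exact chain'_of_reduce_eq_self (FreeGroup.reduce_toWord ω)
        have hωm : (FreeGroup.of y)⁻¹ * ω = FreeGroup.mk ((y, false) :: ω.toWord) := by
          conv_lhs => rw [← FreeGroup.mk_toWord (x := ω)]
          exact of_inv_mul_mk y ω.toWord
        have hword : ((FreeGroup.of y)⁻¹ * ω).toWord = (y, false) :: ω.toWord := by
          rw [hωm, FreeGroup.toWord_mk, hred]
        have hpre : (y, false) :: p <+: ((FreeGroup.of y)⁻¹ * ω).toWord := by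
          rw [hword]; exact List.cons_prefix_cons.mpr ⟨rfl, hp⟩
        have := hξ.2.1 _ hω ((y, false) :: p) hpre
        rwa [← of_inv_mul_mk] at this
    · intro ω hω a b ha hb
      simp only [← mul_assoc] at ha hb
      exact hξ.2.2.1 _ hω a b ha hb
    · intro ω hω a ha x
      simp only [← mul_assoc] at ha ⊢
      exact hξ.2.2.2 _ hω a ha x
  · rintro ⟨t, ht⟩
    apply hub
    refine ⟨(FreeGroup.of y)⁻¹ * t, fun s hs => ?_⟩
    have h1 : (fun ω => ξ ((FreeGroup.of y)⁻¹ * ω)) (FreeGroup.of y * s) = true := by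
      simpa [← mul_assoc] using hs
    have := ht (FreeGroup.of y * s) h1
    rwa [mul_inv_rev, mul_assoc] at this

/-! ### transfer to `OmegaT` -/

lemma isClosed_pattern₁ {α : Type*} [TopologicalSpace α] (a : α → Bool) (ha : Continuous a)
    (P : Bool → Prop) : IsClosed {ξ : α | P (a ξ)} :=
  (isClosed_discrete {v | P v}).preimage ha

lemma isClosed_pattern₂ {α : Type*} [TopologicalSpace α] (a b : α → Bool)
    (ha : Continuous a) (hb : Continuous b) (P : Bool → Bool → Prop) :
    IsClosed {ξ : α | P (a ξ) (b ξ)} :=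
  (isClosed_discrete {v : Bool × Bool | P v.1 v.2}).preimage (ha.prodMk hb)

lemma omegaT_sub {A : G → G → Bool} (Q : (FreeGroup G → Bool) → Prop)
    (hC : IsClosed {ξ | Q ξ}) (h : ∀ ξ, IsCK A ξ → Unbounded ξ → Q ξ) :
    ∀ {ξ}, ξ ∈ OmegaT A → Q ξ :=
  fun hξ => closure_minimal (fun ζ hζ => h ζ hζ.1 hζ.2) hC hξ

lemma o_one {A : G → G → Bool} {ξ : FreeGroup G → Bool} (hξ : ξ ∈ OmegaT A) :
    ξ (1 : FreeGroup G) = true :=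
  omegaT_sub (fun ξ => ξ (1 : FreeGroup G) = true)
    (isClosed_pattern₁ (α := FreeGroup G → Bool) (fun ξ => ξ 1) (continuous_apply _) (· = true))
    (fun _ h _ => h.1) hξ

lemma o_prefix {A : G → G → Bool} {ξ : FreeGroup G → Bool} (hξ : ξ ∈ OmegaT A)
    {t : FreeGroup G} {p : List (G × Bool)} (hp : p <+: t.toWord) (ht : ξ t = true) :
    ξ (FreeGroup.mk p) = true :=
  omegaT_sub (fun ξ => ξ t = true → ξ (FreeGroup.mk p) = true)
    (isClosed_pattern₂ (α := FreeGroup G → Bool) (fun ξ => ξ t) (fun ξ => ξ (FreeGroup.mk p))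
    (continuous_apply _) (continuous_apply _) (fun u v => u = true → v = true))
    (fun _ h _ => fun ht' => ck_prefix_s14 h hp ht') hξ ht

lemma o_head {A : G → G → Bool} {ξ : FreeGroup G → Bool} (hξ : ξ ∈ OmegaT A)
    {t : FreeGroup G} {y : G} {q : List (G × Bool)}
    (hw : t.toWord = (y, true) :: q) (ht : ξ t = true) : ξ (FreeGroup.of y) = true := by
  have : [(y, true)] <+: t.toWord := by rw [hw]; exact ⟨q, rfl⟩
  have h := o_prefix hξ this ht
  rwa [show FreeGroup.mk [(y, true)] = FreeGroup.of y from rfl] at h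

lemma o_b1 {A : G → G → Bool} {ξ : FreeGroup G → Bool} (hξ : ξ ∈ OmegaT A)
    {y z : G} (hy : ξ (FreeGroup.of y) = true) (hz : ξ (FreeGroup.of z) = true) : y = z := by
  by_contra hne
  exact hne (omegaT_sub
    (fun ξ => ξ (FreeGroup.of y) = true → ξ (FreeGroup.of z) = true → y = z)
    (isClosed_pattern₂ (α := FreeGroup G → Bool) (fun ξ => ξ (FreeGroup.of y))
    (fun ξ => ξ (FreeGroup.of z)) (continuous_apply _) (continuous_apply _)
    (fun u v => u = true → v = true → y = z))
    (fun _ h _ => fun hy' hz' => ck_b1 h hy' hz') hξ hy hz)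

lemma o_c1 {A : G → G → Bool} {ξ : FreeGroup G → Bool} (hξ : ξ ∈ OmegaT A)
    {y x : G} (hy : ξ (FreeGroup.of y) = true) : ξ ((FreeGroup.of x)⁻¹) = A x y :=
  omegaT_sub (fun ξ => ξ (FreeGroup.of y) = true → ξ ((FreeGroup.of x)⁻¹) = A x y)
    (isClosed_pattern₂ (α := FreeGroup G → Bool) (fun ξ => ξ (FreeGroup.of y))
    (fun ξ => ξ ((FreeGroup.of x)⁻¹)) (continuous_apply _) (continuous_apply _)
    (fun u v => u = true → v = A x y))
    (fun _ h _ => fun hy' => ck_c1 h hy') hξ hy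

lemma o_nonnormal {A : G → G → Bool} {ξ : FreeGroup G → Bool} (hξ : ξ ∈ OmegaT A)
    {t : FreeGroup G} (h : ¬ Nml t.toWord) : ξ t = false :=
  omegaT_sub (fun ξ => ξ t = false)
    (isClosed_pattern₁ (α := FreeGroup G → Bool) (fun ξ => ξ t) (continuous_apply _) (· = false))
    (fun _ hck _ => ck_nonnormal hck h) hξ

lemma o_drop_last {A : G → G → Bool} {ξ : FreeGroup G → Bool} (hξ : ξ ∈ OmegaT A)
    {t : FreeGroup G} {v : List (G × Bool)} {x z : G}
    (hw : t.toWord = v ++ [(x, false), (z, false)]) :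
    ξ t = (A z x && ξ (FreeGroup.mk (v ++ [(x, false)]))) :=
  omegaT_sub (fun ξ => ξ t = (A z x && ξ (FreeGroup.mk (v ++ [(x, false)]))))
    (isClosed_pattern₂ (α := FreeGroup G → Bool) (fun ξ => ξ t)
    (fun ξ => ξ (FreeGroup.mk (v ++ [(x, false)]))) (continuous_apply _) (continuous_apply _)
    (fun u w' => u = (A z x && w')))
    (fun _ hck _ => ck_drop_last hck hw) hξ

lemma o_shift {A : G → G → Bool} {ξ : FreeGroup G → Bool} (hξ : ξ ∈ OmegaT A)
    {y : G} (hy : ξ ((FreeGroup.of y)⁻¹) = true) :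
    (fun ω => ξ ((FreeGroup.of y)⁻¹ * ω)) ∈ OmegaT A := by
  set T : (FreeGroup G → Bool) → FreeGroup G → Bool :=
    fun ζ ω => ζ ((FreeGroup.of y)⁻¹ * ω) with hT
  have hTc : Continuous T := continuous_pi fun ω => continuous_apply _
  set U : Set (FreeGroup G → Bool) := {ζ | ζ ((FreeGroup.of y)⁻¹) = true} with hU
  have hUo : IsOpen U := by
    have hrw : U = (fun ζ : FreeGroup G → Bool => ζ ((FreeGroup.of y)⁻¹)) ⁻¹' {true} := by
      ext ζ; simp [hU]
    rw [hrw]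
    exact (continuous_apply _).isOpen_preimage _ (isOpen_discrete _)
  set S := {ζ : FreeGroup G → Bool | IsCK A ζ ∧ Unbounded ζ} with hS
  have h1 : ξ ∈ closure (U ∩ S) := hUo.inter_closure ⟨hy, hξ⟩
  have h2 : T ξ ∈ closure (T '' (U ∩ S)) :=
    image_closure_subset_closure_image hTc ⟨ξ, h1, rfl⟩
  have h3 : T '' (U ∩ S) ⊆ S := by
    rintro _ ⟨ζ, ⟨hζU, hζS⟩, rfl⟩
    exact ck_shift hζS.1 hζS.2 hζU
  exact closure_mono h3 h2


/-! ### algebra layer -/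

noncomputable def chi (t : FreeGroup G) (ξ : FreeGroup G → Bool) : ℤ :=
  if ξ t = true then 1 else 0

noncomputable def PP (L : Multiset (FreeGroup G)) (ξ : FreeGroup G → Bool) : ℤ :=
  (L.map (fun t => chi t ξ)).prod

def mu (t : FreeGroup G) : ℕ := 2 * (t.toWord.countP (fun l => l.2)) + t.toWord.length

def nu (L : Multiset (FreeGroup G)) : ℕ := (L.map (fun t => mu t + 1)).sum

lemma PP_cons (t : FreeGroup G) (L : Multiset (FreeGroup G)) (ξ : FreeGroup G → Bool) :
    PP (t ::ₘ L) ξ = chi t ξ * PP L ξ := by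
  simp [PP]

lemma PP_zero (ξ : FreeGroup G → Bool) : PP (0 : Multiset (FreeGroup G)) ξ = 1 := by
  simp [PP]

lemma nu_cons (t : FreeGroup G) (L : Multiset (FreeGroup G)) :
    nu (t ::ₘ L) = (mu t + 1) + nu L := by simp [nu]

lemma chi_eq_one {t : FreeGroup G} {ξ : FreeGroup G → Bool} (h : ξ t = true) :
    chi t ξ = 1 := by simp [chi, h]

lemma chi_eq_zero {t : FreeGroup G} {ξ : FreeGroup G → Bool} (h : ξ t = false) :
    chi t ξ = 0 := by simp [chi, h]

lemma continuous_chi (t : FreeGroup G) : Continuous (chi t) := by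
  have h : chi t = (fun b : Bool => if b = true then (1 : ℤ) else 0) ∘
      (fun ξ : FreeGroup G → Bool => ξ t) := by
    funext ξ; simp [chi]
  rw [h]
  exact Continuous.comp continuous_of_discreteTopology (continuous_apply t)

lemma continuous_PP (L : Multiset (FreeGroup G)) : Continuous (PP L) := by
  induction L using Multiset.induction with
  | empty =>
    have : PP (0 : Multiset (FreeGroup G)) = fun _ => 1 := by funext ξ; exact PP_zero ξ
    rw [this]; exact continuous_const
  | cons t L ih =>
    have : PP (t ::ₘ L) = fun ξ => chi t ξ * PP L ξ := by funext ξ; exact PP_cons ..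
    rw [this]; exact (continuous_chi t).mul ih

/-- the central predicate: `g` is congruent to an element of `ℜ` modulo the image of `L_α` -/
def Good (A : G → G → Bool) (g : (CKO.OmegaT A) → ℤ) : Prop :=
  ∃ f : G → (FreeGroup G → Bool) → ℤ, CKO.MemDirectSum A f ∧
    ∃ h ∈ CKO.frakR A, ∀ ξ : CKO.OmegaT A, g ξ = CKO.Lalpha f (ξ : FreeGroup G → Bool) + h ξ

variable {A : G → G → Bool}

lemma memDS_zero : MemDirectSum A (fun _ _ => (0 : ℤ)) :=
  ⟨Set.Finite.subset Set.finite_empty (fun x hx => absurd rfl hx),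
   fun _ _ _ => rfl, fun _ => continuous_const⟩

lemma lalpha_zero (ξ : FreeGroup G → Bool) :
    Lalpha (G := G) (fun _ _ => (0 : ℤ)) ξ = 0 := by
  simp [Lalpha]

lemma support_fin₁ {f : G → (FreeGroup G → Bool) → ℤ} (hf : MemDirectSum A f)
    (ξ : FreeGroup G → Bool) : (Function.support fun x => f x ξ).Finite :=
  hf.1.subset (fun x hx => fun h => hx (show (fun x => f x ξ) x = 0 by
    show f x ξ = 0; rw [h]; rfl))

lemma support_fin₂ {f : G → (FreeGroup G → Bool) → ℤ} (hf : MemDirectSum A f)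
    (ξ : FreeGroup G → Bool) :
    (Function.support fun x => if ξ ((FreeGroup.of x)⁻¹) = true
      then f x fun ω => ξ ((FreeGroup.of x)⁻¹ * ω) else 0).Finite := by
  apply hf.1.subset
  intro x hx h0
  apply hx
  simp only [Function.mem_support] at *
  rw [h0]
  simp

lemma memDS_add {f f' : G → (FreeGroup G → Bool) → ℤ} (hf : MemDirectSum A f)
    (hf' : MemDirectSum A f') : MemDirectSum A (fun x ξ => f x ξ + f' x ξ) := by
  refine ⟨(hf.1.union hf'.1).subset ?_, ?_, ?_⟩
  · intro x hx
    by_contra hmem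
    simp only [Set.mem_union, Set.mem_setOf_eq, not_or, not_not] at hmem
    apply hx
    funext ξ
    show f x ξ + f' x ξ = (0 : (FreeGroup G → Bool) → ℤ) ξ
    rw [show f x = 0 from hmem.1, show f' x = 0 from hmem.2]
    simp
  · intro x ξ h
    show f x ξ + f' x ξ = 0
    rw [hf.2.1 x ξ h, hf'.2.1 x ξ h]
    simp
  · intro x
    exact (hf.2.2 x).add (hf'.2.2 x)

lemma lalpha_add {f f' : G → (FreeGroup G → Bool) → ℤ} (hf : MemDirectSum A f)
    (hf' : MemDirectSum A f') (ξ : FreeGroup G → Bool) :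
    Lalpha (fun x ζ => f x ζ + f' x ζ) ξ = Lalpha f ξ + Lalpha f' ξ := by
  unfold Lalpha
  have h1 : (∑ᶠ x : G, (f x ξ + f' x ξ)) = (∑ᶠ x : G, f x ξ) + ∑ᶠ x : G, f' x ξ :=
    finsum_add_distrib (support_fin₁ hf ξ) (support_fin₁ hf' ξ)
  have h2 : (∑ᶠ x : G, if ξ ((FreeGroup.of x)⁻¹) = true
        then (f x fun ω => ξ ((FreeGroup.of x)⁻¹ * ω)) + (f' x fun ω => ξ ((FreeGroup.of x)⁻¹ * ω))
        else 0) =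
      (∑ᶠ x : G, if ξ ((FreeGroup.of x)⁻¹) = true
        then f x fun ω => ξ ((FreeGroup.of x)⁻¹ * ω) else 0) +
      ∑ᶠ x : G, if ξ ((FreeGroup.of x)⁻¹) = true
        then f' x fun ω => ξ ((FreeGroup.of x)⁻¹ * ω) else 0 := by
    rw [← finsum_add_distrib (support_fin₂ hf ξ) (support_fin₂ hf' ξ)]
    congr 1
    funext x
    split <;> simp
  rw [h1, h2]
  ring

lemma good_congr {g g' : (CKO.OmegaT A) → ℤ} (h : ∀ ξ, g ξ = g' ξ) (hg : Good A g) :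
    Good A g' := by
  obtain ⟨f, hf, hh, hhm, heq⟩ := hg
  exact ⟨f, hf, hh, hhm, fun ξ => (h ξ).symm.trans (heq ξ)⟩

lemma good_frakR {h : (CKO.OmegaT A) → ℤ} (hh : h ∈ frakR A) : Good A h :=
  ⟨fun _ _ => 0, memDS_zero, h, hh, fun ξ => by rw [lalpha_zero]; ring⟩

lemma good_zero : Good A (fun _ => (0 : ℤ)) :=
  good_frakR (Subring.zero_mem _)

lemma good_add {g g' : (CKO.OmegaT A) → ℤ} (hg : Good A g) (hg' : Good A g') :
    Good A (fun ξ => g ξ + g' ξ) := by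
  obtain ⟨f, hf, h, hm, heq⟩ := hg
  obtain ⟨f', hf', h', hm', heq'⟩ := hg'
  refine ⟨fun x ζ => f x ζ + f' x ζ, memDS_add hf hf', h + h', Subring.add_mem _ hm hm', ?_⟩
  intro ξ
  show g ξ + g' ξ = _
  rw [heq ξ, heq' ξ, lalpha_add hf hf']
  show _ = _ + (h ξ + h' ξ)
  ring

lemma good_neg {g : (CKO.OmegaT A) → ℤ} (hg : Good A g) : Good A (fun ξ => -(g ξ)) := by
  obtain ⟨f, hf, h, hm, heq⟩ := hg
  refine ⟨fun x ζ => -(f x ζ), ?_, -h, Subring.neg_mem _ hm, ?_⟩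
  · refine ⟨hf.1.subset ?_, ?_, ?_⟩
    · intro x hx
      by_contra h0
      simp only [Set.mem_setOf_eq, not_not] at h0
      apply hx
      funext ξ
      show -(f x ξ) = (0 : (FreeGroup G → Bool) → ℤ) ξ
      rw [show f x = 0 from h0]
      simp
    · intro x ξ hcond
      show -(f x ξ) = 0
      rw [hf.2.1 x ξ hcond]; ring
    · intro x; exact (hf.2.2 x).neg
  · intro ξ
    have h1 : ∀ ζ : FreeGroup G → Bool, Lalpha (fun x ζ => -(f x ζ)) ζ = -(Lalpha f ζ) := by
      intro ζ
      unfold Lalpha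
      rw [show (∑ᶠ x : G, -(f x ζ)) = -(∑ᶠ x : G, f x ζ) from finsum_neg_distrib _]
      rw [show (∑ᶠ x : G, if ζ ((FreeGroup.of x)⁻¹) = true
          then -(f x fun ω => ζ ((FreeGroup.of x)⁻¹ * ω)) else 0) =
          -(∑ᶠ x : G, if ζ ((FreeGroup.of x)⁻¹) = true
          then f x fun ω => ζ ((FreeGroup.of x)⁻¹ * ω) else 0) from by
        rw [← finsum_neg_distrib]
        congr 1; funext x; split <;> simp]
      ring
    show -(g ξ) = _
    rw [heq ξ, h1]
    show _ = _ + (-(h ξ))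
    ring

lemma good_sub {g g' : (CKO.OmegaT A) → ℤ} (hg : Good A g) (hg' : Good A g') :
    Good A (fun ξ => g ξ - g' ξ) := by
  have := good_add hg (good_neg hg')
  exact good_congr (fun ξ => by ring) this

lemma good_zsmul {g : (CKO.OmegaT A) → ℤ} (hg : Good A g) (c : ℤ) :
    Good A (fun ξ => c * g ξ) := by
  induction c using Int.induction_on with
  | zero => exact good_congr (fun ξ => by ring) good_zero
  | succ n ih => exact good_congr (fun ξ => by push_cast; ring) (good_add ih hg)
  | pred n ih => exact good_congr (fun ξ => by push_cast; ring) (good_sub ih hg)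

lemma good_sum {β : Type*} (s : Finset β) (φ : β → (CKO.OmegaT A) → ℤ)
    (h : ∀ b ∈ s, Good A (φ b)) : Good A (fun ξ => ∑ b ∈ s, φ b ξ) := by
  induction s using Finset.cons_induction with
  | empty => exact good_congr (fun ξ => by simp) good_zero
  | cons b s hb ih =>
    have h1 : Good A (φ b) := h b (Finset.mem_cons_self b s)
    have h2 : Good A (fun ξ => ∑ b' ∈ s, φ b' ξ) := ih (fun b' hb' => h b' (Finset.mem_cons.mpr (Or.inr hb')))
    exact good_congr (fun ξ => by rw [Finset.sum_cons]) (good_add h1 h2)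

lemma good_lalpha_add {f : G → (FreeGroup G → Bool) → ℤ} (hf : MemDirectSum A f)
    {g : (CKO.OmegaT A) → ℤ} (hg : Good A g) :
    Good A (fun ξ => Lalpha f (ξ : FreeGroup G → Bool) + g ξ) := by
  obtain ⟨f', hf', h, hm, heq⟩ := hg
  refine ⟨fun x ζ => f x ζ + f' x ζ, memDS_add hf hf', h, hm, ?_⟩
  intro ξ
  show Lalpha f (ξ : FreeGroup G → Bool) + g ξ = _
  rw [lalpha_add hf hf', heq ξ]
  ring


/-! ### frakR membership and word classification -/

lemma frakR_PP (L : Multiset (FreeGroup G))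
    (h : ∀ t ∈ L, (∃ i, t = FreeGroup.of i) ∨ (∃ i, t = (FreeGroup.of i)⁻¹)) :
    (fun ξ : CKO.OmegaT A => PP L (ξ : FreeGroup G → Bool)) ∈ frakR A := by
  induction L using Multiset.induction with
  | empty =>
    have heq : (fun ξ : CKO.OmegaT A => PP (0 : Multiset (FreeGroup G)) ↑ξ) =
        (1 : CKO.OmegaT A → ℤ) := by
      funext ξ; exact PP_zero _
    rw [heq]; exact Subring.one_mem _
  | cons t L ih =>
    have hfun : (fun ξ : CKO.OmegaT A => PP (t ::ₘ L) ↑ξ) =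
        (fun ξ : CKO.OmegaT A => chi t ↑ξ) * (fun ξ : CKO.OmegaT A => PP L ↑ξ) := by
      funext ξ; exact PP_cons ..
    rw [hfun]
    refine Subring.mul_mem _ ?_ (ih fun u hu => h u (Multiset.mem_cons_of_mem hu))
    rcases h t (Multiset.mem_cons_self t L) with ⟨i, rfl⟩ | ⟨i, rfl⟩
    · exact Subring.subset_closure (Or.inl ⟨i, rfl⟩)
    · exact Subring.subset_closure (Or.inr ⟨i, rfl⟩)

lemma good_PP_empty : Good A (fun ξ : CKO.OmegaT A => PP (0 : Multiset (FreeGroup G)) ↑ξ) :=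
  good_frakR (frakR_PP 0 (fun t ht => absurd ht (Multiset.notMem_zero t)))

lemma PP_eq_zero_of_mem {L : Multiset (FreeGroup G)} {t : FreeGroup G} (htL : t ∈ L)
    {ξ : FreeGroup G → Bool} (h : chi t ξ = 0) : PP L ξ = 0 := by
  obtain ⟨L', rfl⟩ := Multiset.exists_cons_of_mem htL
  rw [PP_cons, h, zero_mul]

lemma toWord_of_inv (x : G) : ((FreeGroup.of x)⁻¹ : FreeGroup G).toWord = [(x, false)] := by
  rw [of_inv_eq_mk, FreeGroup.toWord_mk]
  rfl

lemma shift_toWord {t : FreeGroup G} {y : G} {q : List (G × Bool)}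
    (hw : t.toWord = (y, true) :: q) : ((FreeGroup.of y)⁻¹ * t).toWord = q := by
  have h1 : (FreeGroup.of y)⁻¹ * t = FreeGroup.mk q := by
    conv_lhs => rw [← FreeGroup.mk_toWord (x := t), hw]
    exact of_inv_mul_mk_cons y q
  rw [h1]
  exact toWord_mk_of_infix (t := t) (by rw [hw]; exact (List.suffix_cons _ _).isInfix)

lemma mu_one : mu (1 : FreeGroup G) = 0 := by simp [mu, FreeGroup.toWord_one]

lemma mu_inv (y : G) : mu ((FreeGroup.of y)⁻¹ : FreeGroup G) = 1 := by
  rw [mu, toWord_of_inv]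
  rfl

lemma mu_shift {t : FreeGroup G} {y : G} {q : List (G × Bool)}
    (hw : t.toWord = (y, true) :: q) :
    mu t = mu ((FreeGroup.of y)⁻¹ * t) + 3 := by
  unfold mu
  rw [shift_toWord hw, hw]
  simp [List.countP_cons]
  omega

lemma mu_droplast {t t' : FreeGroup G} {v : List (G × Bool)} {x z : G}
    (hw : t.toWord = v ++ [(x, false), (z, false)]) (hw' : t'.toWord = v ++ [(x, false)]) :
    mu t = mu t' + 1 := by
  unfold mu
  rw [hw, hw']
  simp [List.countP_append, List.countP_cons]
  omega

lemma nu_shift (y : G) : ∀ (L : Multiset (FreeGroup G)),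
    (∀ u ∈ L, ∃ q', u.toWord = (y, true) :: q') →
    nu L = nu (L.map (fun t => (FreeGroup.of y)⁻¹ * t)) + 3 * Multiset.card L := by
  intro L
  induction L using Multiset.induction with
  | empty => intro _; simp [nu]
  | cons t L ih =>
    intro h
    obtain ⟨q', hq⟩ := h t (Multiset.mem_cons_self t L)
    rw [Multiset.map_cons, nu_cons, nu_cons, ih (fun u hu => h u (Multiset.mem_cons_of_mem hu)),
        mu_shift hq, Multiset.card_cons]
    ring

lemma nml_all_false : ∀ {q : List (G × Bool)} {a : G × Bool}, a.2 = false →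
    Nml (a :: q) → ∀ l ∈ a :: q, l.2 = false := by
  intro q
  induction q with
  | nil =>
    intro a ha _ l hl
    rw [List.mem_singleton.mp hl]; exact ha
  | cons b q ih =>
    intro a ha hch l hl
    have hab := (List.isChain_cons_cons.mp hch).1
    have hb : b.2 = false := hab ha
    rcases List.mem_cons.mp hl with rfl | hl'
    · exact ha
    · exact ih hb (List.isChain_cons_cons.mp hch).2 l hl'

lemma last_two_of_all_false {w : List (G × Bool)} (hall : ∀ l ∈ w, l.2 = false)
    (hlen : 2 ≤ w.length) : ∃ v x z, w = v ++ [(x, false), (z, false)] := by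
  obtain ⟨a, b, r, hrev⟩ : ∃ a b r, w.reverse = a :: b :: r := by
    rcases hr : w.reverse with _ | ⟨a, _ | ⟨b, r⟩⟩
    · exfalso
      have h0 : w.length = 0 := by rw [← List.length_reverse, hr]; rfl
      omega
    · exfalso
      have h0 : w.length = 1 := by rw [← List.length_reverse, hr]; rfl
      omega
    · exact ⟨a, b, r, rfl⟩
  have hw : w = r.reverse ++ [b, a] := by
    have h2 := congrArg List.reverse hrev
    rw [List.reverse_reverse] at h2
    rw [h2]; simp
  have hamem : a ∈ w := by rw [hw]; simp
  have hbmem : b ∈ w := by rw [hw]; simp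
  rcases a with ⟨xa, ba⟩
  rcases b with ⟨xb, bb⟩
  have hba : ba = false := hall _ hamem
  have hbb : bb = false := hall _ hbmem
  subst hba; subst hbb
  exact ⟨r.reverse, xb, xa, hw⟩

lemma word_shape {t : FreeGroup G} (hne : t ≠ 1) (hN : Nml t.toWord)
    (h3 : ∀ (v : List (G × Bool)) (x z : G), t.toWord ≠ v ++ [(x, false), (z, false)]) :
    (∃ x, t.toWord = [(x, false)]) ∨ (∃ y q, t.toWord = (y, true) :: q) := by
  cases hw : t.toWord with
  | nil => exact absurd (FreeGroup.toWord_eq_nil_iff.mp hw) hne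
  | cons a w' =>
    rcases a with ⟨x, b⟩
    cases b
    · left
      cases w' with
      | nil => exact ⟨x, rfl⟩
      | cons a2 w'' =>
        exfalso
        have hNml : Nml ((x, false) :: a2 :: w'') := hw ▸ hN
        have hall := nml_all_false rfl hNml
        have hlen : 2 ≤ ((x, false) :: a2 :: w'').length := by simp
        obtain ⟨v, x', z', hdecomp⟩ := last_two_of_all_false hall hlen
        exact h3 v x' z' (hw.trans hdecomp)
    · exact Or.inr ⟨x, w', rfl⟩


/-! ### the main induction -/

lemma chi_false_of_not_true {t : FreeGroup G} {ξ : FreeGroup G → Bool}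
    (h : ¬ ξ t = true) : chi t ξ = 0 :=
  chi_eq_zero (by simpa using h)

lemma main (A : G → G → Bool) : ∀ (n : ℕ) (L : Multiset (FreeGroup G)), nu L ≤ n →
    Good A (fun ξ : CKO.OmegaT A => PP L (ξ : FreeGroup G → Bool)) := by
  intro n
  induction n with
  | zero =>
    intro L hL
    have hL0 : L = 0 := by
      by_contra h0
      obtain ⟨t, ht⟩ := Multiset.exists_mem_of_ne_zero h0
      have hle : mu t + 1 ≤ nu L :=
        Multiset.single_le_sum (fun x _ => Nat.zero_le x) _
          (Multiset.mem_map_of_mem _ ht)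
      omega
    subst hL0
    exact good_PP_empty
  | succ n IH =>
    intro L hL
    by_cases hL0 : L = 0
    · subst hL0; exact good_PP_empty
    -- Case 1 : some word is not normal: the product vanishes on Ω̃
    by_cases h1 : ∃ t ∈ L, ¬ Nml t.toWord
    · obtain ⟨t, htL, hnn⟩ := h1
      refine good_congr (g := fun _ => 0) (fun ξ => ?_) good_zero
      exact (PP_eq_zero_of_mem htL (chi_eq_zero (o_nonnormal ξ.2 hnn))).symm
    push_neg at h1
    -- Case 2 : `1 ∈ L` : drop it
    by_cases h2 : (1 : FreeGroup G) ∈ L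
    · have hL' : L = (1 : FreeGroup G) ::ₘ L.erase 1 := (Multiset.cons_erase h2).symm
      have hnuL : nu L = (mu (1 : FreeGroup G) + 1) + nu (L.erase 1) := by
        conv_lhs => rw [hL']
        exact nu_cons _ _
      have hnu : nu (L.erase 1) ≤ n := by rw [mu_one] at hnuL; omega
      refine good_congr (fun ξ => ?_) (IH (L.erase 1) hnu)
      show PP (L.erase 1) ↑ξ = PP L ↑ξ
      conv_rhs => rw [hL', PP_cons]
      rw [chi_eq_one (o_one ξ.2), one_mul]
    -- Case 3 : some word ends with two `false` letters
    by_cases h3 : ∃ t ∈ L, ∃ v x z, t.toWord = v ++ [(x, false), (z, false)]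
    · obtain ⟨t, htL, v, x, z, hw⟩ := h3
      have hw2 : t.toWord = (v ++ [(x, false)]) ++ [(z, false)] := by rw [hw]; simp
      have hw' : (FreeGroup.mk (v ++ [(x, false)])).toWord = v ++ [(x, false)] :=
        toWord_mk_of_infix (t := t)
          (show (v ++ [(x, false)]) <+: t.toWord from by
            rw [hw2]; exact ⟨[(z, false)], rfl⟩).isInfix
      cases hA : A z x
      · refine good_congr (g := fun _ => 0) (fun ξ => ?_) good_zero
        have hzero : (↑ξ : FreeGroup G → Bool) t = false := by
          have hd := o_drop_last ξ.2 hw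
          rw [hA] at hd
          simpa using hd
        exact (PP_eq_zero_of_mem htL (chi_eq_zero hzero)).symm
      · have hL' : L = t ::ₘ L.erase t := (Multiset.cons_erase htL).symm
        have hmu : mu t = mu (FreeGroup.mk (v ++ [(x, false)])) + 1 := mu_droplast hw hw'
        have hnuL : nu L = (mu t + 1) + nu (L.erase t) := by
          conv_lhs => rw [hL']
          exact nu_cons _ _
        have hnu : nu (FreeGroup.mk (v ++ [(x, false)]) ::ₘ L.erase t) ≤ n := by
          rw [nu_cons]; omega
        refine good_congr (fun ξ => ?_) (IH _ hnu)
        show PP (FreeGroup.mk (v ++ [(x, false)]) ::ₘ L.erase t) ↑ξ = PP L ↑ξ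
        conv_rhs => rw [hL', PP_cons]
        rw [PP_cons]
        congr 1
        have hd := o_drop_last ξ.2 hw
        rw [hA, Bool.true_and] at hd
        unfold chi
        rw [hd]
    -- Case 4 : two distinct positive heads : product vanishes
    by_cases h4 : ∃ t ∈ L, ∃ u ∈ L.erase t, ∃ y q y' q',
        t.toWord = (y, true) :: q ∧ u.toWord = (y', true) :: q' ∧ y ≠ y'
    · obtain ⟨t, htL, u, huE, y, q, y', q', hwt, hwu, hyy⟩ := h4
      refine good_congr (g := fun _ => 0) (fun ξ => ?_) good_zero
      by_cases hξt : (↑ξ : FreeGroup G → Bool) t = true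
      · by_cases hξu : (↑ξ : FreeGroup G → Bool) u = true
        · exact absurd (o_b1 ξ.2 (o_head ξ.2 hwt hξt) (o_head ξ.2 hwu hξu)) hyy
        · exact (PP_eq_zero_of_mem (Multiset.mem_of_mem_erase huE)
            (chi_false_of_not_true hξu)).symm
      · exact (PP_eq_zero_of_mem htL (chi_false_of_not_true hξt)).symm
    push_neg at h4
    -- Case 5 : every word has length one : product of generators, in `ℜ`
    by_cases h5 : ∀ t ∈ L, t.toWord.length = 1
    · refine good_frakR (frakR_PP L ?_)
      intro t htL
      obtain ⟨⟨x, b⟩, hw⟩ := List.length_eq_one_iff.mp (h5 t htL)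
      cases b
      · exact Or.inr ⟨x, by rw [← FreeGroup.mk_toWord (x := t), hw, ← of_inv_eq_mk]⟩
      · exact Or.inl ⟨x, by rw [← FreeGroup.mk_toWord (x := t), hw]; rfl⟩
    push_neg at h5
    push_neg at h3
    obtain ⟨t₀, ht₀L, hlen⟩ := h5
    have hne : t₀ ≠ 1 := fun h => h2 (h ▸ ht₀L)
    rcases word_shape hne (h1 t₀ ht₀L) (h3 t₀ ht₀L) with ⟨x, hw⟩ | ⟨y, q, hw⟩
    · exact absurd (by rw [hw]; rfl) hlen
    -- Case 6 : some other coordinate is `(of x)⁻¹` : eliminate it via relation (c)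
    by_cases h6 : ∃ u ∈ L.erase t₀, ∃ x, u.toWord = [(x, false)]
    · obtain ⟨u, huE, x, hwu⟩ := h6
      have huL : u ∈ L := Multiset.mem_of_mem_erase huE
      have hu : u = (FreeGroup.of x)⁻¹ := by
        rw [← FreeGroup.mk_toWord (x := u), hwu, ← of_inv_eq_mk]
      have hut : t₀ ≠ u := by
        intro h
        rw [h, hwu] at hw
        simp at hw
      cases hA : A x y
      · refine good_congr (g := fun _ => 0) (fun ξ => ?_) good_zero
        by_cases hξt : (↑ξ : FreeGroup G → Bool) t₀ = true
        · have hxinv : (↑ξ : FreeGroup G → Bool) ((FreeGroup.of x)⁻¹) = false := by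
            rw [o_c1 ξ.2 (o_head ξ.2 hw hξt), hA]
          exact (PP_eq_zero_of_mem huL (chi_eq_zero (by rw [hu]; exact hxinv))).symm
        · exact (PP_eq_zero_of_mem ht₀L (chi_false_of_not_true hξt)).symm
      · have hLu : L = u ::ₘ L.erase u := (Multiset.cons_erase huL).symm
        have ht₀E : t₀ ∈ L.erase u := (Multiset.mem_erase_of_ne hut).mpr ht₀L
        have hmuu : mu u = 1 := by rw [hu]; exact mu_inv x
        have hnuL : nu L = (mu u + 1) + nu (L.erase u) := by
          conv_lhs => rw [hLu]
          exact nu_cons _ _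
        have hnu : nu (L.erase u) ≤ n := by omega
        refine good_congr (fun ξ => ?_) (IH _ hnu)
        show PP (L.erase u) ↑ξ = PP L ↑ξ
        by_cases hξt : (↑ξ : FreeGroup G → Bool) t₀ = true
        · have hchiu : chi u ↑ξ = 1 := chi_eq_one (by
            rw [hu, o_c1 ξ.2 (o_head ξ.2 hw hξt), hA])
          conv_rhs => rw [hLu, PP_cons]
          rw [hchiu, one_mul]
        · rw [PP_eq_zero_of_mem ht₀E (chi_false_of_not_true hξt),
              PP_eq_zero_of_mem ht₀L (chi_false_of_not_true hξt)]
    push_neg at h6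
    -- Case 7 : all coordinates start with `(y, true)` : apply `L_α`
    have hall : ∀ u ∈ L, ∃ q', u.toWord = (y, true) :: q' := by
      intro u huL
      have hneu : u ≠ 1 := fun h => h2 (h ▸ huL)
      rcases word_shape hneu (h1 u huL) (h3 u huL) with ⟨x, hwu⟩ | ⟨y', q', hwu⟩
      · exfalso
        have huu : u ≠ t₀ := by
          intro h
          rw [h, hw] at hwu
          simp at hwu
        exact h6 u ((Multiset.mem_erase_of_ne huu).mpr huL) x hwu
      · by_cases hut : u = t₀
        · subst hut
          have heq : (y', true) :: q' = (y, true) :: q := hwu.symm.trans hw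
          have hy' : y' = y := by
            injection heq with ha hb
            exact congrArg Prod.fst ha
          exact ⟨q', by rw [hwu, hy']⟩
        · have := h4 t₀ ht₀L u ((Multiset.mem_erase_of_ne hut).mpr huL) y q y' q' hw hwu
          exact ⟨q', by rw [hwu, this]⟩
    -- the `L_α` move
    set L' : Multiset (FreeGroup G) :=
      ((FreeGroup.of y)⁻¹) ::ₘ L.map (fun t => (FreeGroup.of y)⁻¹ * t) with hL'def
    have hcard : 1 ≤ Multiset.card L := Multiset.card_pos.mpr hL0
    have hnuL' : nu L' ≤ n := by
      have hsum := nu_shift y L hall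
      have hcons : nu L' = (mu ((FreeGroup.of y)⁻¹ : FreeGroup G) + 1) +
          nu (L.map (fun t => (FreeGroup.of y)⁻¹ * t)) := nu_cons _ _
      rw [mu_inv] at hcons
      omega
    have hGM := IH L' hnuL'
    classical
    set f : G → (FreeGroup G → Bool) → ℤ := fun x ξ =>
      if x = y ∧ ξ ∈ CKO.OmegaT A ∧ ξ (FreeGroup.of y) = true then PP L ξ else 0 with hfdef
    have hfy : ∀ ξ : FreeGroup G → Bool, ξ ∈ CKO.OmegaT A → ξ (FreeGroup.of y) = true →
        f y ξ = PP L ξ := by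
      intro ξ h1' h2'
      rw [hfdef]
      exact if_pos ⟨rfl, h1', h2'⟩
    have hfy0 : ∀ ξ : FreeGroup G → Bool, ¬ ξ (FreeGroup.of y) = true → f y ξ = 0 := by
      intro ξ h'
      rw [hfdef]
      exact if_neg (fun hc => h' hc.2.2)
    have hfx : ∀ x, x ≠ y → ∀ ξ : FreeGroup G → Bool, f x ξ = 0 := by
      intro x hx ξ
      rw [hfdef]
      exact if_neg (fun hc => hx hc.1)
    have hfMem : MemDirectSum A f := by
      refine ⟨(Set.finite_singleton y).subset ?_, ?_, ?_⟩
      · intro x hx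
        by_contra hxy
        simp only [Set.mem_singleton_iff] at hxy
        exact hx (funext (hfx x hxy))
      · intro x ξ hcond
        by_cases hxy : x = y
        · subst hxy
          rw [hfdef]
          refine if_neg ?_
          rintro ⟨-, hmem, hofy⟩
          rcases hcond with h' | h'
          · exact h' hmem
          · exact h' hofy
        · exact hfx x hxy ξ
      · intro x
        by_cases hxy : x = y
        · subst hxy
          have heq : (fun ξ : CKO.OmegaT A => f x ↑ξ) =
              fun ξ : CKO.OmegaT A => chi (FreeGroup.of x) ↑ξ * PP L ↑ξ := by
            funext ξ
            by_cases hc : (↑ξ : FreeGroup G → Bool) (FreeGroup.of x) = true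
            · rw [hfy ↑ξ ξ.2 hc, chi_eq_one hc, one_mul]
            · rw [hfy0 ↑ξ hc, chi_false_of_not_true hc, zero_mul]
          rw [heq]
          exact (((continuous_chi _).comp continuous_subtype_val).mul
            ((continuous_PP L).comp continuous_subtype_val))
        · have heq : (fun ξ : CKO.OmegaT A => f x ↑ξ) = fun _ => 0 := by
            funext ξ; exact hfx x hxy ↑ξ
          rw [heq]
          exact continuous_const
    refine good_congr (fun ξ => ?_) (good_lalpha_add hfMem hGM)
    show Lalpha f ↑ξ + PP L' ↑ξ = PP L ↑ξ
    have hS1 : (∑ᶠ x : G, f x ↑ξ) = f y ↑ξ :=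
      finsum_eq_single _ y (fun x hx => hfx x hx ↑ξ)
    have hS2 : (∑ᶠ x : G, if (↑ξ : FreeGroup G → Bool) ((FreeGroup.of x)⁻¹) = true
        then f x (fun ω => (↑ξ : FreeGroup G → Bool) ((FreeGroup.of x)⁻¹ * ω)) else 0) =
        if (↑ξ : FreeGroup G → Bool) ((FreeGroup.of y)⁻¹) = true
        then f y (fun ω => (↑ξ : FreeGroup G → Bool) ((FreeGroup.of y)⁻¹ * ω)) else 0 :=
      finsum_eq_single _ y (fun x hx => by
        split
        · exact hfx x hx _
        · rfl)
    have hLal : Lalpha f ↑ξ = f y ↑ξ -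
        (if (↑ξ : FreeGroup G → Bool) ((FreeGroup.of y)⁻¹) = true
        then f y (fun ω => (↑ξ : FreeGroup G → Bool) ((FreeGroup.of y)⁻¹ * ω)) else 0) := by
      rw [Lalpha, hS1, hS2]
    have hPPL' : PP L' ↑ξ = chi ((FreeGroup.of y)⁻¹) ↑ξ *
        PP (L.map (fun t => (FreeGroup.of y)⁻¹ * t)) ↑ξ := PP_cons _ _ _
    have hshiftPP : PP L (fun ω => (↑ξ : FreeGroup G → Bool) ((FreeGroup.of y)⁻¹ * ω)) =
        PP (L.map (fun t => (FreeGroup.of y)⁻¹ * t)) ↑ξ := by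
      unfold PP
      rw [Multiset.map_map]
      rfl
    have hPPL0 : ¬ (↑ξ : FreeGroup G → Bool) (FreeGroup.of y) = true →
        PP L ↑ξ = 0 := by
      intro hofy
      refine PP_eq_zero_of_mem ht₀L (chi_eq_zero ?_)
      cases hc : (↑ξ : FreeGroup G → Bool) t₀
      · rfl
      · exact absurd (o_head ξ.2 hw hc) hofy
    by_cases hyinv : (↑ξ : FreeGroup G → Bool) ((FreeGroup.of y)⁻¹) = true
    · have hTmem : (fun ω => (↑ξ : FreeGroup G → Bool) ((FreeGroup.of y)⁻¹ * ω)) ∈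
          CKO.OmegaT A := o_shift ξ.2 hyinv
      have hTofy : (fun ω => (↑ξ : FreeGroup G → Bool) ((FreeGroup.of y)⁻¹ * ω))
          (FreeGroup.of y) = true := by
        show (↑ξ : FreeGroup G → Bool) ((FreeGroup.of y)⁻¹ * FreeGroup.of y) = true
        rw [inv_mul_cancel]
        exact o_one ξ.2
      have hfyT := hfy _ hTmem hTofy
      rw [hLal, if_pos hyinv, hfyT, hshiftPP, hPPL', chi_eq_one hyinv, one_mul]
      by_cases hofy : (↑ξ : FreeGroup G → Bool) (FreeGroup.of y) = true
      · rw [hfy ↑ξ ξ.2 hofy]; ring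
      · rw [hfy0 ↑ξ hofy, hPPL0 hofy]; ring
    · rw [hLal, if_neg hyinv, hPPL', chi_false_of_not_true hyinv, zero_mul]
      by_cases hofy : (↑ξ : FreeGroup G → Bool) (FreeGroup.of y) = true
      · rw [hfy ↑ξ ξ.2 hofy]; ring
      · rw [hfy0 ↑ξ hofy, hPPL0 hofy]; ring


/-! ### mixed products -/

lemma bool_eq_of_iff {P : Prop} {b c : Bool} (h1 : b = true ↔ P) (h2 : c = true ↔ P) :
    b = c := by
  cases b <;> cases c <;> simp_all

lemma good_mixed (A : G → G → Bool) (F : Finset (FreeGroup G)) :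
    ∀ (M : Multiset (FreeGroup G)) (S : Finset (FreeGroup G)),
    Good A (fun ξ : CKO.OmegaT A => PP M (ξ : FreeGroup G → Bool) *
      ∏ t ∈ F, (if t ∈ S then chi t (ξ : FreeGroup G → Bool)
        else 1 - chi t (ξ : FreeGroup G → Bool))) := by
  induction F using Finset.cons_induction with
  | empty =>
    intro M S
    refine good_congr (fun ξ => ?_) (main A (nu M) M le_rfl)
    show PP M ↑ξ = _
    simp
  | cons a F' ha ih =>
    intro M S
    by_cases haS : a ∈ S
    · refine good_congr (fun ξ => ?_) (ih (a ::ₘ M) S)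
      show PP (a ::ₘ M) ↑ξ * _ = _
      rw [PP_cons, Finset.prod_cons, if_pos haS]
      ring
    · have hgood := good_sub (ih M S) (ih (a ::ₘ M) S)
      refine good_congr (fun ξ => ?_) hgood
      show PP M ↑ξ * _ - PP (a ::ₘ M) ↑ξ * _ = _
      rw [PP_cons, Finset.prod_cons, if_neg haS]
      ring

/-! ### every continuous function is Good -/

lemma good_continuous (A : G → G → Bool) (g : C(CKO.OmegaT A, ℤ)) :
    Good A (fun ξ => g ξ) := by
  classical
  have hcl : IsClosed (CKO.OmegaT A) := isClosed_closure
  have hcs : CompactSpace (CKO.OmegaT A) := isCompact_iff_compactSpace.mp hcl.isCompact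
  -- local finite dependence
  have hloc : ∀ ξ : CKO.OmegaT A, ∃ F : Finset (FreeGroup G),
      ∀ ξ' : CKO.OmegaT A, (∀ t ∈ F, (ξ' : FreeGroup G → Bool) t = (ξ : FreeGroup G → Bool) t) →
        g ξ' = g ξ := by
    intro ξ
    have hopen : IsOpen {ξ' : CKO.OmegaT A | g ξ' = g ξ} := by
      have h' : {ξ' : CKO.OmegaT A | g ξ' = g ξ} = g ⁻¹' {g ξ} := rfl
      rw [h']
      exact (isOpen_discrete _).preimage g.continuous
    obtain ⟨O, hOopen, hOeq⟩ := isOpen_induced_iff.mp hopen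
    have hξO : (ξ : FreeGroup G → Bool) ∈ O := by
      have h' : ξ ∈ Subtype.val ⁻¹' O := by
        rw [hOeq]; exact rfl
      exact h'
    obtain ⟨I, u, hIu, hsub⟩ := isOpen_pi_iff.mp hOopen _ hξO
    refine ⟨I, fun ξ' hagree => ?_⟩
    have hmem : (ξ' : FreeGroup G → Bool) ∈ O := by
      apply hsub
      rw [Set.mem_pi]
      intro t htI
      rw [hagree t htI]
      exact (hIu t htI).2
    have h'' : ξ' ∈ Subtype.val ⁻¹' O := hmem
    rw [hOeq] at h''
    exact h''
  choose Floc hFloc using hloc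
  -- global finite dependence via compactness
  have hWopen : ∀ ζ : CKO.OmegaT A, IsOpen {ξ' : CKO.OmegaT A |
      ∀ t ∈ Floc ζ, (ξ' : FreeGroup G → Bool) t = (ζ : FreeGroup G → Bool) t} := by
    intro ζ
    have h' : {ξ' : CKO.OmegaT A |
        ∀ t ∈ Floc ζ, (ξ' : FreeGroup G → Bool) t = (ζ : FreeGroup G → Bool) t} =
        ⋂ t ∈ Floc ζ, {ξ' : CKO.OmegaT A |
          (ξ' : FreeGroup G → Bool) t = (ζ : FreeGroup G → Bool) t} := by
      ext ξ'; simp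
    rw [h']
    refine isOpen_biInter_finset fun t _ => ?_
    have h'' : {ξ' : CKO.OmegaT A | (ξ' : FreeGroup G → Bool) t = (ζ : FreeGroup G → Bool) t} =
        (fun ξ' : CKO.OmegaT A => (ξ' : FreeGroup G → Bool) t) ⁻¹'
          {(ζ : FreeGroup G → Bool) t} := rfl
    rw [h'']
    exact (isOpen_discrete _).preimage ((continuous_apply t).comp continuous_subtype_val)
  obtain ⟨s, hs⟩ := IsCompact.elim_finite_subcover isCompact_univ _ hWopen
    (fun ξ _ => Set.mem_iUnion.mpr ⟨ξ, fun t _ => rfl⟩)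
  set F : Finset (FreeGroup G) := s.sup Floc with hF
  have hdep : ∀ ξ ξ' : CKO.OmegaT A,
      (∀ t ∈ F, (ξ : FreeGroup G → Bool) t = (ξ' : FreeGroup G → Bool) t) → g ξ = g ξ' := by
    intro ξ ξ' hagree
    obtain ⟨ζ, hζs, hξW⟩ : ∃ ζ ∈ s, ∀ t ∈ Floc ζ,
        (ξ : FreeGroup G → Bool) t = (ζ : FreeGroup G → Bool) t := by
      have h' := hs (Set.mem_univ ξ)
      simpa using h'
    have h1 : g ξ = g ζ := hFloc ζ ξ hξW
    have h2 : g ξ' = g ζ := hFloc ζ ξ' (fun t ht => by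
      rw [← hagree t (Finset.mem_of_subset (Finset.le_sup hζs) ht)]
      exact hξW t ht)
    rw [h1, h2]
  -- representation as a combination of cylinder functions
  set val : Finset (FreeGroup G) → ℤ := fun S =>
    if h : ∃ ξ : CKO.OmegaT A, ∀ t ∈ F, ((ξ : FreeGroup G → Bool) t = true ↔ t ∈ S)
    then g h.choose else 0 with hval
  have hrepr : ∀ ξ : CKO.OmegaT A, g ξ = ∑ S ∈ F.powerset,
      val S * ∏ t ∈ F, (if t ∈ S then chi t (ξ : FreeGroup G → Bool)
        else 1 - chi t (ξ : FreeGroup G → Bool)) := by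
    intro ξ
    set S₀ : Finset (FreeGroup G) :=
      F.filter (fun t => (ξ : FreeGroup G → Bool) t = true) with hS₀
    have hS₀mem : S₀ ∈ F.powerset := Finset.mem_powerset.mpr (Finset.filter_subset _ _)
    rw [Finset.sum_eq_single S₀ ?_ ?_]
    · have hprod : (∏ t ∈ F, (if t ∈ S₀ then chi t (ξ : FreeGroup G → Bool)
          else 1 - chi t (ξ : FreeGroup G → Bool))) = 1 := by
        apply Finset.prod_eq_one
        intro t htF
        by_cases hmem : t ∈ S₀
        · rw [if_pos hmem, chi_eq_one ((Finset.mem_filter.mp hmem).2)]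
        · rw [if_neg hmem]
          have h' : ¬ (ξ : FreeGroup G → Bool) t = true :=
            fun hc => hmem (Finset.mem_filter.mpr ⟨htF, hc⟩)
          rw [chi_false_of_not_true h']
          ring
      rw [hprod, mul_one]
      simp only [hval]
      have hex : ∃ ξ' : CKO.OmegaT A, ∀ t ∈ F,
          ((ξ' : FreeGroup G → Bool) t = true ↔ t ∈ S₀) :=
        ⟨ξ, fun t htF => ⟨fun hc => Finset.mem_filter.mpr ⟨htF, hc⟩,
          fun hm => (Finset.mem_filter.mp hm).2⟩⟩
      rw [dif_pos hex]
      refine hdep _ _ (fun t htF => ?_)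
      exact bool_eq_of_iff
        ⟨fun hc => Finset.mem_filter.mpr ⟨htF, hc⟩, fun hm => (Finset.mem_filter.mp hm).2⟩
        (hex.choose_spec t htF)
    · intro S hS hSne
      have hexist : ∃ t ∈ F, ¬ ((t ∈ S) ↔ (t ∈ S₀)) := by
        by_contra hc
        push_neg at hc
        apply hSne
        ext t
        constructor
        · intro htS
          exact (hc t (Finset.mem_powerset.mp hS htS)).mp htS
        · intro htS₀
          exact (hc t (Finset.mem_powerset.mp hS₀mem htS₀)).mpr htS₀
      obtain ⟨t, htF, hne⟩ := hexist
      have hzero : (if t ∈ S then chi t (ξ : FreeGroup G → Bool)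
          else 1 - chi t (ξ : FreeGroup G → Bool)) = 0 := by
        by_cases htS : t ∈ S
        · rw [if_pos htS]
          have h' : t ∉ S₀ := fun hm => hne ⟨fun _ => hm, fun _ => htS⟩
          have h'' : ¬ (ξ : FreeGroup G → Bool) t = true :=
            fun hc => h' (Finset.mem_filter.mpr ⟨htF, hc⟩)
          exact chi_false_of_not_true h''
        · rw [if_neg htS]
          have h' : t ∈ S₀ := by
            by_contra h''
            exact hne ⟨fun hm => absurd hm htS, fun hm => absurd hm h''⟩
          rw [chi_eq_one ((Finset.mem_filter.mp h').2)]
          ring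
      rw [Finset.prod_eq_zero htF hzero, mul_zero]
    · intro h'
      exact absurd hS₀mem h'
  refine good_congr (fun ξ => (hrepr ξ).symm) ?_
  apply good_sum
  intro S hS
  have hbase := good_mixed A F 0 S
  have hbase' : Good A (fun ξ : CKO.OmegaT A =>
      ∏ t ∈ F, (if t ∈ S then chi t (ξ : FreeGroup G → Bool)
        else 1 - chi t (ξ : FreeGroup G → Bool))) := by
    refine good_congr (fun ξ => ?_) hbase
    show PP (0 : Multiset (FreeGroup G)) ↑ξ * _ = _
    rw [PP_zero, one_mul]
  exact good_zsmul hbase' (val S)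

end CKOAux

/-- Every continuous `g : Ω̃_A → ℤ` is congruent, modulo the image of
`L_α`, to an element of the ring `ℜ` generated by `1` and the characteristic functions of the
`Δ_i` and `Δ_{i⁻¹}`. -/
theorem stmt_14 {G : Type*} [Nonempty G] [DecidableEq G]
    (A : G → G → Bool) (hA : ∀ i : G, ∃ j : G, A i j = true)
    (g : C(CKO.OmegaT A, ℤ)) :
    ∃ f : G → (FreeGroup G → Bool) → ℤ, CKO.MemDirectSum A f ∧
      ∃ h ∈ CKO.frakR A, ∀ ξ : CKO.OmegaT A,
        g ξ = CKO.Lalpha f (ξ : FreeGroup G → Bool) + h ξ :=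
  CKOAux.good_continuous A g
end
end
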